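/- arXiv:1403.7732 — 3 statements merged into one kernel-verified Lean document; each statement's English description precedes it below -/
import Mathlib

section
/- Let H₁, H₂ be complex Hilbert spaces, H := H₁ × H₂, and let 𝒜 = [[A, B],[C, D]] be a block operator matrix satisfying the basic assumptions, with A = A* and D = D*. Then the induced operator 𝒜 is self-adjoint if one of the following holds: (a) C is A-bounded with relative bound < 1 and B is D-bounded with relative bound ≤ 1; (b) C is A-bounded with relative bound ≤ 1 and B is D-bounded with relative bound < 1. -/
open LinearPMap
open scoped LinearPMap

namespace BlockOp

variable {E F G X₁ X₂ Y₁ Y₂ : Type*}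
  [AddCommGroup E] [Module ℂ E] [AddCommGroup F] [Module ℂ F] [AddCommGroup G] [Module ℂ G]
  [AddCommGroup X₁] [Module ℂ X₁] [AddCommGroup X₂] [Module ℂ X₂]
  [AddCommGroup Y₁] [Module ℂ Y₁] [AddCommGroup Y₂] [Module ℂ Y₂]

/-- The operator on `X₁ × X₂` induced by a block operator matrix `[[A, B], [C, D]]`. -/
noncomputable def blockOp (A : X₁ →ₗ.[ℂ] Y₁) (B : X₂ →ₗ.[ℂ] Y₁)
    (C : X₁ →ₗ.[ℂ] Y₂) (D : X₂ →ₗ.[ℂ] Y₂) : (X₁ × X₂) →ₗ.[ℂ] (Y₁ × Y₂) where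
  domain := (A.domain ⊓ C.domain).prod (B.domain ⊓ D.domain)
  toFun := LinearMap.prod
    (A.toFun ∘ₗ Submodule.inclusion inf_le_left ∘ₗ
        (LinearMap.fst ℂ X₁ X₂).restrict
          (p := (A.domain ⊓ C.domain).prod (B.domain ⊓ D.domain))
          (q := A.domain ⊓ C.domain) (fun _ hx => hx.1)
      + B.toFun ∘ₗ Submodule.inclusion inf_le_left ∘ₗ
        (LinearMap.snd ℂ X₁ X₂).restrict
          (p := (A.domain ⊓ C.domain).prod (B.domain ⊓ D.domain))
          (q := B.domain ⊓ D.domain) (fun _ hx => hx.2))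
    (C.toFun ∘ₗ Submodule.inclusion inf_le_right ∘ₗ
        (LinearMap.fst ℂ X₁ X₂).restrict
          (p := (A.domain ⊓ C.domain).prod (B.domain ⊓ D.domain))
          (q := A.domain ⊓ C.domain) (fun _ hx => hx.1)
      + D.toFun ∘ₗ Submodule.inclusion inf_le_right ∘ₗ
        (LinearMap.snd ℂ X₁ X₂).restrict
          (p := (A.domain ⊓ C.domain).prod (B.domain ⊓ D.domain))
          (q := B.domain ⊓ D.domain) (fun _ hx => hx.2))

/-- A linear operator on a product space has a matrix representation if it is induced
by some block operator matrix. -/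
def HasMatrixRep (T : (X₁ × X₂) →ₗ.[ℂ] (Y₁ × Y₂)) : Prop :=
  ∃ (A : X₁ →ₗ.[ℂ] Y₁) (B : X₂ →ₗ.[ℂ] Y₁) (C : X₁ →ₗ.[ℂ] Y₂) (D : X₂ →ₗ.[ℂ] Y₂),
    T = blockOp A B C D

/-- The composition of two partially defined operators, with its natural domain
`{x ∈ D(B) : B x ∈ D(A)}`. -/
noncomputable def pcomp (A : F →ₗ.[ℂ] G) (B : E →ₗ.[ℂ] F) : E →ₗ.[ℂ] G where
  domain :=
    { carrier := {x | ∃ hx : x ∈ B.domain, B ⟨x, hx⟩ ∈ A.domain}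
      zero_mem' := ⟨B.domain.zero_mem, by
        have : (⟨0, B.domain.zero_mem⟩ : B.domain) = 0 := rfl
        rw [this, LinearPMap.map_zero]; exact A.domain.zero_mem⟩
      add_mem' := by
        rintro a b ⟨ha, ha'⟩ ⟨hb, hb'⟩
        refine ⟨add_mem ha hb, ?_⟩
        have : (⟨a + b, add_mem ha hb⟩ : B.domain) = ⟨a, ha⟩ + ⟨b, hb⟩ := rfl
        rw [this, LinearPMap.map_add]
        exact add_mem ha' hb'
      smul_mem' := by
        rintro c a ⟨ha, ha'⟩
        refine ⟨Submodule.smul_mem _ c ha, ?_⟩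
        have : (⟨c • a, Submodule.smul_mem _ c ha⟩ : B.domain) = c • (⟨a, ha⟩ : B.domain) := rfl
        rw [this, LinearPMap.map_smul]
        exact Submodule.smul_mem _ c ha' }
  toFun := A.toFun ∘ₗ LinearMap.codRestrict A.domain
      (B.toFun ∘ₗ
        { toFun := fun x => (⟨(x : E), x.2.choose⟩ : B.domain)
          map_add' := fun x y => Subtype.ext rfl
          map_smul' := fun c x => Subtype.ext rfl })
      (fun x => x.2.choose_spec)

end BlockOp

namespace BlockOp

section Transport

variable {E F G E' F' : Type*}
  [AddCommGroup E] [Module ℂ E] [AddCommGroup F] [Module ℂ F] [AddCommGroup G] [Module ℂ G]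
  [AddCommGroup E'] [Module ℂ E'] [AddCommGroup F'] [Module ℂ F']

/-- Transport a partially defined linear map along linear equivalences. -/
noncomputable def pmapCongr (e : E ≃ₗ[ℂ] E') (T : E' →ₗ.[ℂ] F') (e' : F' ≃ₗ[ℂ] F) :
    E →ₗ.[ℂ] F where
  domain := T.domain.comap (e : E →ₗ[ℂ] E')
  toFun := (e' : F' →ₗ[ℂ] F) ∘ₗ T.toFun ∘ₗ
    ((e : E →ₗ[ℂ] E').restrict (p := T.domain.comap (e : E →ₗ[ℂ] E')) (q := T.domain)
      (fun _ hx => hx))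

end Transport

section Corners

variable {X₁ X₂ Y₁ Y₂ : Type*}
  [AddCommGroup X₁] [Module ℂ X₁] [AddCommGroup X₂] [Module ℂ X₂]
  [AddCommGroup Y₁] [Module ℂ Y₁] [AddCommGroup Y₂] [Module ℂ Y₂]

/-- The upper-left corner `P₁ 𝒜 J₁` of an operator on a product space, with domain
`{x₁ : (x₁, 0) ∈ D(𝒜)}`. -/
noncomputable def corner₁₁ (T : (X₁ × X₂) →ₗ.[ℂ] (Y₁ × Y₂)) : X₁ →ₗ.[ℂ] Y₁ where
  domain := T.domain.comap (LinearMap.inl ℂ X₁ X₂)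
  toFun := LinearMap.fst ℂ Y₁ Y₂ ∘ₗ T.toFun ∘ₗ
    ((LinearMap.inl ℂ X₁ X₂).restrict (p := T.domain.comap (LinearMap.inl ℂ X₁ X₂))
      (q := T.domain) (fun _ hx => hx))

/-- The lower-left corner `P₂ 𝒜 J₁`. -/
noncomputable def corner₂₁ (T : (X₁ × X₂) →ₗ.[ℂ] (Y₁ × Y₂)) : X₁ →ₗ.[ℂ] Y₂ where
  domain := T.domain.comap (LinearMap.inl ℂ X₁ X₂)
  toFun := LinearMap.snd ℂ Y₁ Y₂ ∘ₗ T.toFun ∘ₗ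
    ((LinearMap.inl ℂ X₁ X₂).restrict (p := T.domain.comap (LinearMap.inl ℂ X₁ X₂))
      (q := T.domain) (fun _ hx => hx))

/-- The upper-right corner `P₁ 𝒜 J₂`. -/
noncomputable def corner₁₂ (T : (X₁ × X₂) →ₗ.[ℂ] (Y₁ × Y₂)) : X₂ →ₗ.[ℂ] Y₁ where
  domain := T.domain.comap (LinearMap.inr ℂ X₁ X₂)
  toFun := LinearMap.fst ℂ Y₁ Y₂ ∘ₗ T.toFun ∘ₗ
    ((LinearMap.inr ℂ X₁ X₂).restrict (p := T.domain.comap (LinearMap.inr ℂ X₁ X₂))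
      (q := T.domain) (fun _ hx => hx))

/-- The lower-right corner `P₂ 𝒜 J₂`. -/
noncomputable def corner₂₂ (T : (X₁ × X₂) →ₗ.[ℂ] (Y₁ × Y₂)) : X₂ →ₗ.[ℂ] Y₂ where
  domain := T.domain.comap (LinearMap.inr ℂ X₁ X₂)
  toFun := LinearMap.snd ℂ Y₁ Y₂ ∘ₗ T.toFun ∘ₗ
    ((LinearMap.inr ℂ X₁ X₂).restrict (p := T.domain.comap (LinearMap.inr ℂ X₁ X₂))
      (q := T.domain) (fun _ hx => hx))

end Corners

section Shift

variable {E : Type*} [AddCommGroup E] [Module ℂ E]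

/-- `T - λ`, i.e. `T - λ·I`, with domain `D(T)`. -/
noncomputable def shift (T : E →ₗ.[ℂ] E) (lam : ℂ) : E →ₗ.[ℂ] E :=
  T - (lam • (LinearMap.id : E →ₗ[ℂ] E)).toPMap ⊤

/-- The identity as a partially defined operator with full domain. -/
noncomputable def idP (E : Type*) [AddCommGroup E] [Module ℂ E] : E →ₗ.[ℂ] E :=
  (LinearMap.id : E →ₗ[ℂ] E).toPMap ⊤

end Shift

section Resolvent

variable {E : Type*} [NormedAddCommGroup E] [NormedSpace ℂ E]

/-- `R` is the (bounded, everywhere defined) inverse of `T - λ`;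
this witnesses that `λ` belongs to the resolvent set of `T`. -/
structure IsResolventAt (T : E →ₗ.[ℂ] E) (lam : ℂ) (R : E →L[ℂ] E) : Prop where
  mem : ∀ y, R y ∈ T.domain
  right_inv : ∀ y, T ⟨R y, mem y⟩ - lam • (R y) = y
  left_inv : ∀ x : T.domain, R (T x - lam • (x : E)) = x

/-- The resolvent set of `T`: those `λ ∈ ℂ` for which `T - λ` is a bijection from `D(T)`
onto the whole space with bounded inverse. -/
def resolventSet (T : E →ₗ.[ℂ] E) : Set ℂ :=
  {lam | ∃ R : E →L[ℂ] E, IsResolventAt T lam R}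

end Resolvent

section RelativeBound

variable {E F G : Type*} [NormedAddCommGroup E] [NormedSpace ℂ E]
  [NormedAddCommGroup F] [NormedSpace ℂ F] [NormedAddCommGroup G] [NormedSpace ℂ G]

/-- `S` is `T`-bounded with constants `a`, `b`:
`D(T) ⊆ D(S)` and `‖S x‖ ≤ a ‖x‖ + b ‖T x‖` on `D(T)`. -/
structure RelBound (S : E →ₗ.[ℂ] G) (T : E →ₗ.[ℂ] F) (a b : ℝ) : Prop where
  dom_le : T.domain ≤ S.domain
  bound : ∀ x : T.domain, ‖S ⟨(x : E), dom_le x.2⟩‖ ≤ a * ‖(x : E)‖ + b * ‖T x‖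

/-- `S` is `T`-bounded with relative bound `< c`. -/
def IsRelBoundedLt (S : E →ₗ.[ℂ] G) (T : E →ₗ.[ℂ] F) (c : ℝ) : Prop :=
  ∃ b, 0 ≤ b ∧ b < c ∧ ∃ a, 0 ≤ a ∧ RelBound S T a b

/-- `S` is `T`-bounded with relative bound `≤ c` (for `c = 0`: relative bound `0`). -/
def IsRelBoundedLe (S : E →ₗ.[ℂ] G) (T : E →ₗ.[ℂ] F) (c : ℝ) : Prop :=
  ∀ b, c < b → ∃ a, 0 ≤ a ∧ RelBound S T a b

end RelativeBound

section HilbertProduct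

variable {H₁ H₂ K₁ K₂ : Type*}
  [NormedAddCommGroup H₁] [InnerProductSpace ℂ H₁]
  [NormedAddCommGroup H₂] [InnerProductSpace ℂ H₂]
  [NormedAddCommGroup K₁] [InnerProductSpace ℂ K₁]
  [NormedAddCommGroup K₂] [InnerProductSpace ℂ K₂]

/-- The operator induced by a block operator matrix on the Hilbert space
`H₁ ×_{ℓ²} H₂`, i.e. `WithLp 2 (H₁ × H₂)`. -/
noncomputable def blockOpL (A : H₁ →ₗ.[ℂ] K₁) (B : H₂ →ₗ.[ℂ] K₁)
    (C : H₁ →ₗ.[ℂ] K₂) (D : H₂ →ₗ.[ℂ] K₂) :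
    WithLp 2 (H₁ × H₂) →ₗ.[ℂ] WithLp 2 (K₁ × K₂) :=
  pmapCongr (WithLp.linearEquiv 2 ℂ (H₁ × H₂)) (blockOp A B C D)
    (WithLp.linearEquiv 2 ℂ (K₁ × K₂)).symm

/-- A linear operator on `H₁ ×_{ℓ²} H₂` has a matrix representation if it is induced by
some block operator matrix. -/
def HasMatrixRepL (T : WithLp 2 (H₁ × H₂) →ₗ.[ℂ] WithLp 2 (K₁ × K₂)) : Prop :=
  ∃ (A : H₁ →ₗ.[ℂ] K₁) (B : H₂ →ₗ.[ℂ] K₁) (C : H₁ →ₗ.[ℂ] K₂) (D : H₂ →ₗ.[ℂ] K₂),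
    T = blockOpL A B C D

end HilbertProduct

section EssSelfAdjoint

variable {E : Type*} [NormedAddCommGroup E] [InnerProductSpace ℂ E] [CompleteSpace E]

/-- An operator is essentially self-adjoint if it is closable and its closure is
self-adjoint. -/
def IsEssentiallySelfAdjoint (T : E →ₗ.[ℂ] E) : Prop :=
  T.IsClosable ∧ IsSelfAdjoint T.closure

end EssSelfAdjoint

end BlockOp

namespace BlockOp

section AuxiliaryLemmas
open Filter
open scoped InnerProductSpace ComplexConjugate

namespace BlockOpAux

set_option linter.unusedSectionVars false

variable {E : Type*} [NormedAddCommGroup E] [InnerProductSpace ℂ E] [CompleteSpace E]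




lemma sym_of_sa {A : E →ₗ.[ℂ] E} (hA : IsSelfAdjoint A) :
    ∀ x y : A.domain, ⟪A x, (y : E)⟫_ℂ = ⟪(x : E), A y⟫_ℂ := by
  have hAd : Dense (A.domain : Set E) := hA.dense_domain
  have h := LinearPMap.adjoint_isFormalAdjoint (T := A) hAd
  rw [LinearPMap.isSelfAdjoint_def] at hA
  rw [hA] at h
  exact h

lemma sa_limit {A : E →ₗ.[ℂ] E} (hA : IsSelfAdjoint A)
    (x : ℕ → A.domain) (p w : E)
    (hx : Tendsto (fun n => (x n : E)) atTop (nhds p))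
    (hw : Tendsto (fun n => A (x n)) atTop (nhds w)) :
    ∃ h : p ∈ A.domain, A ⟨p, h⟩ = w := by
  have hAd : Dense (A.domain : Set E) := hA.dense_domain
  have hsym := sym_of_sa hA
  have key : ∀ v : A.domain, ⟪w, (v : E)⟫_ℂ = ⟪p, A v⟫_ℂ := by
    intro v
    have h1 : Tendsto (fun n => ⟪A (x n), (v : E)⟫_ℂ) atTop (nhds ⟪w, (v : E)⟫_ℂ) :=
      hw.inner tendsto_const_nhds
    have h2 : Tendsto (fun n => ⟪(x n : E), A v⟫_ℂ) atTop (nhds ⟪p, A v⟫_ℂ) :=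
      hx.inner tendsto_const_nhds
    have heq : (fun n => ⟪A (x n), (v : E)⟫_ℂ) = fun n => ⟪(x n : E), A v⟫_ℂ :=
      funext fun n => hsym _ _
    rw [heq] at h1
    exact tendsto_nhds_unique h1 h2
  have hmem : p ∈ A.adjoint.domain := LinearPMap.mem_adjoint_domain_of_exists _ ⟨w, key⟩
  rw [LinearPMap.isSelfAdjoint_def] at hA
  have hmem' : p ∈ A.domain := hA ▸ hmem
  refine ⟨hmem', ?_⟩
  have hval : A.adjoint ⟨p, hmem⟩ = w :=
    LinearPMap.adjoint_apply_eq hAd (⟨p, hmem⟩ : A.adjoint.domain) fun v => key v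
  have hle : A.adjoint ≤ A := le_of_eq hA
  exact ((hle.2 (x := ⟨p, hmem⟩) (y := ⟨p, hmem'⟩) rfl).symm.trans hval)

lemma shift_norm_sq {A : E →ₗ.[ℂ] E}
    (hsym : ∀ x y : A.domain, ⟪A x, (y : E)⟫_ℂ = ⟪(x : E), A y⟫_ℂ)
    {μ : ℂ} (hμ : μ.re = 0) (x : A.domain) :
    ‖A x - μ • (x : E)‖ ^ 2 = ‖A x‖ ^ 2 + ‖μ‖ ^ 2 * ‖(x : E)‖ ^ 2 := by
  have hreal : (⟪A x, (x : E)⟫_ℂ).im = 0 := by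
    have h1 : conj ⟪A x, (x : E)⟫_ℂ = ⟪A x, (x : E)⟫_ℂ := by
      rw [inner_conj_symm]
      exact (hsym x x).symm
    rw [Complex.conj_eq_iff_im] at h1
    exact h1
  have hre : RCLike.re ⟪A x, μ • (x : E)⟫_ℂ = 0 := by
    rw [inner_smul_right]
    simp only [RCLike.re_to_complex, Complex.mul_re, hμ, hreal]
    ring
  have hns := @norm_sub_sq ℂ _ _ _ _ (A x) (μ • (x : E))
  rw [hre] at hns
  rw [hns, norm_smul]
  simp
  ring



lemma cauchySeq_of_controlled {f g : ℕ → E} (K : ℝ)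
    (hfg : ∀ m n, ‖g m - g n‖ ≤ K * ‖f m - f n‖) (hf : CauchySeq f) : CauchySeq g := by
  rcases le_or_gt K 0 with hK | hK
  · have : ∀ m n, g m = g n := by
      intro m n
      have h := hfg m n
      have h2 : K * ‖f m - f n‖ ≤ 0 := mul_nonpos_of_nonpos_of_nonneg hK (norm_nonneg _)
      have : ‖g m - g n‖ = 0 := le_antisymm (h.trans h2) (norm_nonneg _)
      rwa [norm_eq_zero, sub_eq_zero] at this
    have : g = fun _ => g 0 := funext fun n => this n 0
    rw [this]; exact cauchySeq_const _
  · rw [Metric.cauchySeq_iff] at hf ⊢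
    intro ε hε
    obtain ⟨N, hN⟩ := hf (ε / K) (by positivity)
    refine ⟨N, fun m hm n hn => ?_⟩
    have := hN m hm n hn
    rw [dist_eq_norm] at this ⊢
    calc ‖g m - g n‖ ≤ K * ‖f m - f n‖ := hfg m n
      _ < K * (ε / K) := by exact (mul_lt_mul_iff_right₀ hK).mpr this
      _ = ε := by field_simp

lemma resolvent_exists {A : E →ₗ.[ℂ] E} (hA : IsSelfAdjoint A)
    {μ : ℂ} (hμre : μ.re = 0) (hμ0 : μ ≠ 0) :
    ∃ (R : E →L[ℂ] E) (hmem : ∀ z, R z ∈ A.domain),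
      (∀ z, A ⟨R z, hmem z⟩ - μ • R z = z) ∧
      (∀ z, ‖R z‖ ≤ ‖μ‖⁻¹ * ‖z‖) ∧ (∀ z, ‖A ⟨R z, hmem z⟩‖ ≤ ‖z‖) := by
  have hAd : Dense (A.domain : Set E) := hA.dense_domain
  have hsym := sym_of_sa hA
  have hμn : 0 < ‖μ‖ := norm_pos_iff.mpr hμ0
  have hconj : conj μ = -μ := by
    apply Complex.ext <;> simp [hμre]
  set L : A.domain →ₗ[ℂ] E := A.toFun - μ • A.domain.subtype with hLdef
  have hLapp : ∀ x : A.domain, L x = A x - μ • (x : E) := fun x => rfl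
  have est : ∀ x : A.domain, ‖L x‖ ^ 2 = ‖A x‖ ^ 2 + ‖μ‖ ^ 2 * ‖(x : E)‖ ^ 2 := by
    intro x; rw [hLapp]; exact shift_norm_sq hsym hμre x
  have est1 : ∀ x : A.domain, ‖μ‖ * ‖(x : E)‖ ≤ ‖L x‖ := by
    intro x
    nlinarith [est x, norm_nonneg (L x), norm_nonneg (A x),
      mul_nonneg hμn.le (norm_nonneg ((x : E)))]
  have est2 : ∀ x : A.domain, ‖A x‖ ≤ ‖L x‖ := by
    intro x
    nlinarith [est x, norm_nonneg (L x), norm_nonneg (A x),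
      sq_nonneg (‖μ‖ * ‖(x : E)‖)]
  have hinj : Function.Injective L := by
    intro x y hxy
    have h := est1 (x - y)
    rw [_root_.map_sub, hxy, sub_self, norm_zero] at h
    have h2 : ‖((x - y : A.domain) : E)‖ = 0 := by
      nlinarith [norm_nonneg ((x - y : A.domain) : E)]
    have h3 : ((x : E) - (y : E)) = 0 := by
      rw [← Submodule.coe_sub]; exact norm_eq_zero.mp h2
    exact Subtype.ext (sub_eq_zero.mp h3)
  set M := LinearMap.range L with hMdef
  have hclosed : IsClosed (M : Set E) := by
    apply IsSeqClosed.isClosed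
    intro f z hf hz
    choose x hx using hf
    have hfc : CauchySeq f := hz.cauchySeq
    have hxc : CauchySeq (fun n => (x n : E)) := by
      apply cauchySeq_of_controlled (‖μ‖⁻¹) _ hfc
      intro m n
      have h := est1 (x m - x n)
      rw [_root_.map_sub, hx m, hx n, Submodule.coe_sub] at h
      calc ‖(x m : E) - (x n : E)‖ = ‖μ‖⁻¹ * (‖μ‖ * ‖(x m : E) - (x n : E)‖) :=
            (inv_mul_cancel_left₀ hμn.ne' _).symm
        _ ≤ ‖μ‖⁻¹ * ‖f m - f n‖ :=
            mul_le_mul_of_nonneg_left h (inv_nonneg.mpr hμn.le)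
    obtain ⟨p, hp⟩ := cauchySeq_tendsto_of_complete hxc
    have hAx : Tendsto (fun n => A (x n)) atTop (nhds (z + μ • p)) := by
      have heq : (fun n => A (x n)) = fun n => f n + μ • (x n : E) := by
        funext n
        rw [← hx n, hLapp]
        abel
      rw [heq]
      exact hz.add (hp.const_smul μ)
    obtain ⟨hq, hq2⟩ := sa_limit hA x p (z + μ • p) hp hAx
    refine ⟨⟨p, hq⟩, ?_⟩
    show L ⟨p, hq⟩ = z
    rw [hLapp, hq2]
    abel
  have horth : Mᗮ = ⊥ := by
    rw [Submodule.eq_bot_iff]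
    intro v hv
    rw [Submodule.mem_orthogonal] at hv
    have hv' : ∀ x : A.domain, ⟪v, A x⟫_ℂ = μ * ⟪v, (x : E)⟫_ℂ := by
      intro x
      have h0 : ⟪L x, v⟫_ℂ = 0 := hv _ ⟨x, rfl⟩
      rw [hLapp, inner_sub_left, inner_smul_left, hconj, sub_eq_zero] at h0
      have hcn : conj (-μ) = μ := by rw [_root_.map_neg, hconj, neg_neg]
      have h1 : conj ⟪A x, v⟫_ℂ = conj (-μ * ⟪(x : E), v⟫_ℂ) := by rw [h0]
      rw [inner_conj_symm, map_mul, inner_conj_symm, hcn] at h1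
      exact h1
    have hkey : ∀ x : A.domain, ⟪(-μ) • v, (x : E)⟫_ℂ = ⟪v, A x⟫_ℂ := by
      intro x
      rw [inner_smul_left, show conj (-μ) = μ by rw [_root_.map_neg, hconj, neg_neg], hv' x]
    have hmem : v ∈ A.adjoint.domain :=
      LinearPMap.mem_adjoint_domain_of_exists _ ⟨(-μ) • v, hkey⟩
    have hval : A.adjoint ⟨v, hmem⟩ = (-μ) • v :=
      LinearPMap.adjoint_apply_eq hAd _ fun x => hkey x
    have hAeq : A.adjoint = A := hA
    have hmem' : v ∈ A.domain := hAeq ▸ hmem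
    have hAv : A ⟨v, hmem'⟩ = (-μ) • v :=
      (((le_of_eq hAeq).2 (x := ⟨v, hmem⟩) (y := ⟨v, hmem'⟩) rfl).symm.trans hval)
    have hid := shift_norm_sq hsym hμre ⟨v, hmem'⟩
    rw [hAv] at hid
    have h1 : (-μ) • v - μ • v = (-(2 * μ)) • v := by
      rw [← sub_smul]; ring_nf
    rw [h1, norm_smul, norm_smul] at hid
    have h2 : ‖-(2 * μ)‖ = 2 * ‖μ‖ := by
      rw [norm_neg, norm_mul]
      norm_num
    have h3 : ‖-μ‖ = ‖μ‖ := norm_neg μ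
    rw [h2, h3] at hid
    have hcoe : ‖((⟨v, hmem'⟩ : A.domain) : E)‖ = ‖v‖ := rfl
    rw [hcoe] at hid
    have h4 : (‖μ‖ * ‖v‖) ^ 2 = 0 := by nlinarith [hid]
    have h5 : ‖μ‖ * ‖v‖ = 0 := pow_eq_zero_iff (two_ne_zero) |>.mp h4
    rcases mul_eq_zero.mp h5 with h6 | h6
    · exact absurd h6 (ne_of_gt hμn)
    · exact norm_eq_zero.mp h6
  have hMtop : M = ⊤ := by
    have h1 := Submodule.topologicalClosure_eq_top_iff.mpr horth
    rwa [hclosed.submodule_topologicalClosure_eq] at h1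
  have hsurj : Function.Surjective L := LinearMap.range_eq_top.mp hMtop
  let e := LinearEquiv.ofBijective L ⟨hinj, hsurj⟩
  have hLe : ∀ z, L (e.symm z) = z := fun z => e.apply_symm_apply z
  let R₀ : E →ₗ[ℂ] E := A.domain.subtype ∘ₗ (e.symm : E →ₗ[ℂ] A.domain)
  have hbound : ∀ z, ‖R₀ z‖ ≤ ‖μ‖⁻¹ * ‖z‖ := by
    intro z
    have h := est1 (e.symm z)
    rw [hLe z] at h
    show ‖((e.symm z : A.domain) : E)‖ ≤ ‖μ‖⁻¹ * ‖z‖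
    calc ‖((e.symm z : A.domain) : E)‖
        = ‖μ‖⁻¹ * (‖μ‖ * ‖((e.symm z : A.domain) : E)‖) := (inv_mul_cancel_left₀ hμn.ne' _).symm
      _ ≤ ‖μ‖⁻¹ * ‖z‖ := mul_le_mul_of_nonneg_left h (inv_nonneg.mpr hμn.le)
  refine ⟨R₀.mkContinuous ‖μ‖⁻¹ hbound, fun z => (e.symm z).2, ?_, ?_, ?_⟩
  · intro z
    show A (e.symm z) - μ • ((e.symm z : A.domain) : E) = z
    rw [← hLapp]
    exact hLe z
  · intro z
    exact hbound z
  · intro z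
    show ‖A (e.symm z)‖ ≤ ‖z‖
    calc ‖A (e.symm z)‖ ≤ ‖L (e.symm z)‖ := est2 _
      _ = ‖z‖ := by rw [hLe]

lemma selfAdjoint_of_shift_surj {T : E →ₗ.[ℂ] E}
    (hdense : Dense (T.domain : Set E))
    (hsym : ∀ x y : T.domain, ⟪T x, (y : E)⟫_ℂ = ⟪(x : E), T y⟫_ℂ)
    {μ : ℂ} (hconj : conj μ = -μ)
    (hs₁ : ∀ z, ∃ x : T.domain, T x - μ • (x : E) = z)
    (hs₂ : ∀ z, ∃ x : T.domain, T x + μ • (x : E) = z) :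
    IsSelfAdjoint T := by
  rw [LinearPMap.isSelfAdjoint_def]
  have hTle : T ≤ T.adjoint :=
    LinearPMap.IsFormalAdjoint.le_adjoint hdense fun x y => hsym x y
  have hadj := LinearPMap.adjoint_isFormalAdjoint (T := T) hdense
  have main : ∀ y : T.adjoint.domain,
      ∃ v : T.domain, (v : E) = (y : E) ∧ T v = T.adjoint y := by
    intro y
    obtain ⟨v, hv⟩ := hs₁ (T.adjoint y - μ • (y : E))
    have hw : ∀ z : E, ⟪(y : E) - (v : E), z⟫_ℂ = 0 := by
      intro z
      obtain ⟨x, hx⟩ := hs₂ z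
      rw [← hx]
      have hexp : ⟪(y : E) - (v : E), T x + μ • (x : E)⟫_ℂ
          = ⟪(T.adjoint y - μ • (y : E)) - (T v - μ • (v : E)), (x : E)⟫_ℂ := by
        simp only [inner_add_right, inner_smul_right, inner_sub_left, inner_smul_left, hconj,
          hadj y x]
        rw [← hsym v x]
        ring
      rw [hexp, hv, sub_self, inner_zero_left]
    have hyv : (y : E) = (v : E) := by
      have h := hw ((y : E) - (v : E))
      rwa [inner_self_eq_zero, sub_eq_zero] at h
    refine ⟨v, hyv.symm, ?_⟩
    have hμeq : μ • (v : E) = μ • (y : E) := by rw [hyv]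
    have := hv
    rw [hμeq] at this
    have h2 := congrArg (fun w => w + μ • (y : E)) this
    simpa using h2
  have hle : T.adjoint ≤ T := by
    refine ⟨fun z hz => ?_, fun a b hab => ?_⟩
    · obtain ⟨v, hv1, _⟩ := main ⟨z, hz⟩
      have hv1' : (v : E) = z := hv1
      exact hv1' ▸ v.2
    · obtain ⟨v, hv1, hv2⟩ := main a
      rw [show b = v from Subtype.ext (hab.symm.trans hv1.symm)]
      exact hv2.symm
  exact le_antisymm hle hTle

end BlockOpAux

section RelBoundComp
open BlockOp
variable {E F : Type*} [NormedAddCommGroup E] [InnerProductSpace ℂ E] [CompleteSpace E]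
  [NormedAddCommGroup F] [InnerProductSpace ℂ F]

lemma relbound_comp {S : E →ₗ.[ℂ] F} {A : E →ₗ.[ℂ] E} {a b : ℝ}
    (hS : RelBound S A a b) (ha : 0 ≤ a) (hb : 0 ≤ b)
    {μ : ℂ} (R : E →L[ℂ] E) (hmem : ∀ z, R z ∈ A.domain)
    (hRnorm : ∀ z, ‖R z‖ ≤ ‖μ‖⁻¹ * ‖z‖) (hAnorm : ∀ z, ‖A ⟨R z, hmem z⟩‖ ≤ ‖z‖) :
    ∃ K : E →L[ℂ] F, (∀ z, K z = S ⟨R z, hS.dom_le (hmem z)⟩) ∧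
      ∀ z, ‖K z‖ ≤ (a * ‖μ‖⁻¹ + b) * ‖z‖ := by
  let K₀ : E →ₗ[ℂ] F := S.toFun ∘ₗ
    ((R : E →ₗ[ℂ] E).codRestrict S.domain fun z => hS.dom_le (hmem z))
  have happ : ∀ z, K₀ z = S ⟨R z, hS.dom_le (hmem z)⟩ := fun _ => rfl
  have hbound : ∀ z, ‖K₀ z‖ ≤ (a * ‖μ‖⁻¹ + b) * ‖z‖ := by
    intro z
    have h1 : ‖S ⟨R z, hS.dom_le (hmem z)⟩‖ ≤ a * ‖R z‖ + b * ‖A ⟨R z, hmem z⟩‖ :=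
      hS.bound ⟨R z, hmem z⟩
    rw [happ]
    have h2 := hRnorm z
    have h3 := hAnorm z
    calc ‖S ⟨R z, hS.dom_le (hmem z)⟩‖ ≤ a * ‖R z‖ + b * ‖A ⟨R z, hmem z⟩‖ := h1
      _ ≤ a * (‖μ‖⁻¹ * ‖z‖) + b * ‖z‖ := by
          have := mul_le_mul_of_nonneg_left h2 ha
          have := mul_le_mul_of_nonneg_left h3 hb
          linarith
      _ = (a * ‖μ‖⁻¹ + b) * ‖z‖ := by ring
  exact ⟨K₀.mkContinuous _ hbound, fun z => happ z, fun z => hbound z⟩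

end RelBoundComp
end AuxiliaryLemmas

open scoped InnerProductSpace ComplexConjugate

theorem statement13 {H₁ H₂ : Type*}
    [NormedAddCommGroup H₁] [InnerProductSpace ℂ H₁] [CompleteSpace H₁]
    [NormedAddCommGroup H₂] [InnerProductSpace ℂ H₂] [CompleteSpace H₂]
    (A : H₁ →ₗ.[ℂ] H₁) (B : H₂ →ₗ.[ℂ] H₁) (C : H₁ →ₗ.[ℂ] H₂) (D : H₂ →ₗ.[ℂ] H₂)
    (hAd : Dense (A.domain : Set H₁)) (hBd : Dense (B.domain : Set H₂))
    (hCd : Dense (C.domain : Set H₁)) (hDd : Dense (D.domain : Set H₂))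
    (hAc : A.IsClosable) (hBc : B.IsClosable) (hCc : C.IsClosable) (hDc : D.IsClosable)
    (hAsym : A ≤ A.adjoint) (hBC : B ≤ C.adjoint) (hDsym : D ≤ D.adjoint)
    (hdense : Dense ((blockOpL A B C D).domain : Set (WithLp 2 (H₁ × H₂))))
    (hA : IsSelfAdjoint A) (hD : IsSelfAdjoint D)
    (h : (IsRelBoundedLt C A 1 ∧ IsRelBoundedLe B D 1) ∨
         (IsRelBoundedLe C A 1 ∧ IsRelBoundedLt B D 1)) :
    IsSelfAdjoint (blockOpL A B C D) := by
  classical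
  -- Extract relative-boundedness constants with product of relative bounds < 1
  obtain ⟨a, b, a', b', ha, hb, ha', hb', hCb, hBb, hbb'⟩ :
      ∃ a b a' b' : ℝ, 0 ≤ a ∧ 0 ≤ b ∧ 0 ≤ a' ∧ 0 ≤ b' ∧
        RelBound C A a b ∧ RelBound B D a' b' ∧ b * b' < 1 := by
    rcases h with ⟨⟨b, hb0, hb1, a, ha0, hC⟩, hBle⟩ | ⟨hCle, ⟨b', hb0', hb1', a', ha0', hB⟩⟩
    · obtain ⟨a', ha0', hB⟩ := hBle (2 / (1 + b))
        (by rw [lt_div_iff₀ (by linarith)]; linarith)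
      refine ⟨a, b, a', 2 / (1 + b), ha0, hb0, ha0', by positivity, hC, hB, ?_⟩
      rw [mul_div_assoc']
      rw [div_lt_one (by linarith)]
      linarith
    · obtain ⟨a, ha0, hC⟩ := hCle (2 / (1 + b'))
        (by rw [lt_div_iff₀ (by linarith)]; linarith)
      refine ⟨a, 2 / (1 + b'), a', b', ha0, by positivity, ha0', hb0', hC, hB, ?_⟩
      rw [div_mul_eq_mul_div]
      rw [div_lt_one (by linarith)]
      linarith
  -- Choose the shift size m
  set S : ℝ := a * b' + a' * b + a * a' with hSdef
  have hSnn : 0 ≤ S := by positivity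
  have hε : 0 < 1 - b * b' := by linarith
  set m : ℝ := (2 * S + 1) / (1 - b * b') with hmdef
  have hm1 : 1 ≤ m := by
    rw [hmdef, le_div_iff₀ hε]
    nlinarith [mul_nonneg hb hb']
  have hm0 : 0 < m := lt_of_lt_of_le one_pos hm1
  have hprod : (a * m⁻¹ + b) * (a' * m⁻¹ + b') < 1 := by
    have hminv0 : 0 < m⁻¹ := inv_pos.mpr hm0
    have hminv : m⁻¹ ≤ 1 := inv_le_one_of_one_le₀ hm1
    have hmS : S * m⁻¹ ≤ (1 - b * b') / 2 := by
      rw [hmdef, inv_div]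
      rw [mul_div_assoc']
      rw [div_le_div_iff₀ (by linarith) (by norm_num)]
      nlinarith
    nlinarith [mul_le_mul_of_nonneg_left hminv (mul_nonneg (mul_nonneg ha ha') hminv0.le),
      mul_nonneg (mul_nonneg ha ha') hminv0.le,
      mul_nonneg (mul_nonneg ha hb') hminv0.le,
      mul_nonneg (mul_nonneg ha' hb) hminv0.le]
  set T := blockOpL A B C D with hTdef
  -- Membership and application lemmas for T
  have hmemT : ∀ x : WithLp 2 (H₁ × H₂), x ∈ T.domain ↔
      (x.fst ∈ A.domain ∧ x.fst ∈ C.domain) ∧ (x.snd ∈ B.domain ∧ x.snd ∈ D.domain) :=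
    fun x => Iff.rfl
  have happT : ∀ (x : WithLp 2 (H₁ × H₂)) (hx : x ∈ T.domain),
      T ⟨x, hx⟩ = (WithLp.equiv 2 (H₁ × H₂)).symm
        (A ⟨x.fst, hx.1.1⟩ + B ⟨x.snd, hx.2.1⟩, C ⟨x.fst, hx.1.2⟩ + D ⟨x.snd, hx.2.2⟩) :=
    fun x hx => rfl
  -- Symmetry of T
  have hsymA := BlockOpAux.sym_of_sa hA
  have hsymD := BlockOpAux.sym_of_sa hD
  have hadjC := LinearPMap.adjoint_isFormalAdjoint (T := C) hCd
  have hBC' : ∀ (u : B.domain) (v : C.domain), ⟪B u, (v : H₁)⟫_ℂ = ⟪(u : H₂), C v⟫_ℂ := by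
    intro u v
    have h1 : B u = C.adjoint ⟨(u : H₂), hBC.1 u.2⟩ :=
      hBC.2 (x := u) (y := ⟨(u : H₂), hBC.1 u.2⟩) rfl
    rw [h1]
    exact hadjC ⟨(u : H₂), hBC.1 u.2⟩ v
  have hsymT : ∀ x y : T.domain,
      ⟪T x, (y : WithLp 2 (H₁ × H₂))⟫_ℂ = ⟪(x : WithLp 2 (H₁ × H₂)), T y⟫_ℂ := by
    rintro ⟨x, hx⟩ ⟨y, hy⟩
    rw [happT x hx, happT y hy, WithLp.prod_inner_apply, WithLp.prod_inner_apply]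
    simp only [WithLp.equiv_symm_apply, WithLp.ofLp_toLp, WithLp.ofLp_fst, WithLp.ofLp_snd]
    rw [inner_add_left, inner_add_left, inner_add_right, inner_add_right]
    rw [hsymA ⟨x.fst, hx.1.1⟩ ⟨y.fst, hy.1.1⟩, hsymD ⟨x.snd, hx.2.2⟩ ⟨y.snd, hy.2.2⟩]
    rw [hBC' ⟨x.snd, hx.2.1⟩ ⟨y.fst, hy.1.2⟩]
    have hCB : ⟪C ⟨x.fst, hx.1.2⟩, (y.snd : H₂)⟫_ℂ = ⟪(x.fst : H₁), B ⟨y.snd, hy.2.1⟩⟫_ℂ := by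
      have h2 := hBC' ⟨y.snd, hy.2.1⟩ ⟨x.fst, hx.1.2⟩
      have h3 := congrArg (starRingEnd ℂ) h2
      rw [inner_conj_symm, inner_conj_symm] at h3
      exact h3.symm
    rw [hCB]
    ring
  -- Key surjectivity of T - mu for purely imaginary mu of modulus m
  have key : ∀ μ : ℂ, μ.re = 0 → ‖μ‖ = m → ∀ z : WithLp 2 (H₁ × H₂),
      ∃ x : T.domain, T x - μ • (x : WithLp 2 (H₁ × H₂)) = z := by
    intro μ hμre hμm z
    have hμ0 : μ ≠ 0 := by
      intro h0
      rw [h0, norm_zero] at hμm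
      linarith
    have hμn : 0 < ‖μ‖ := by rw [hμm]; exact hm0
    obtain ⟨R₁, hmem₁, hres₁, hR₁n, hA₁n⟩ := BlockOpAux.resolvent_exists hA hμre hμ0
    obtain ⟨R₂, hmem₂, hres₂, hR₂n, hA₂n⟩ := BlockOpAux.resolvent_exists hD hμre hμ0
    obtain ⟨K₁, hK₁app, hK₁n⟩ := relbound_comp hCb ha hb R₁ hmem₁ hR₁n hA₁n
    obtain ⟨K₂, hK₂app, hK₂n⟩ := relbound_comp hBb ha' hb' R₂ hmem₂ hR₂n hA₂n
    have hK₁ : ‖K₁‖ ≤ a * ‖μ‖⁻¹ + b := K₁.opNorm_le_bound (by positivity) hK₁n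
    have hK₂ : ‖K₂‖ ≤ a' * ‖μ‖⁻¹ + b' := K₂.opNorm_le_bound (by positivity) hK₂n
    have ht : ‖K₁.comp K₂‖ < 1 := by
      calc ‖K₁.comp K₂‖ ≤ ‖K₁‖ * ‖K₂‖ := K₁.opNorm_comp_le K₂
        _ ≤ (a * ‖μ‖⁻¹ + b) * (a' * ‖μ‖⁻¹ + b') :=
            mul_le_mul hK₁ hK₂ (norm_nonneg _) (by positivity)
        _ < 1 := by rw [hμm]; exact hprod
    set t := K₁.comp K₂ with htdef
    set U := Units.oneSub t ht with hUdef
    set w : H₂ := z.snd - K₁ z.fst with hwdef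
    set u : H₂ := (↑U⁻¹ : H₂ →L[ℂ] H₂) w with hudef
    have hU : u - K₁ (K₂ u) = w := by
      have h1 : ((↑U * ↑U⁻¹ : H₂ →L[ℂ] H₂)) w = w := by rw [U.mul_inv]; rfl
      rw [ContinuousLinearMap.mul_apply] at h1
      have h2 : (↑U : H₂ →L[ℂ] H₂) = 1 - t := rfl
      rw [h2, ContinuousLinearMap.sub_apply, ContinuousLinearMap.one_apply] at h1
      exact h1
    set x₂ : H₂ := R₂ u with hx₂def
    set x₁ : H₁ := R₁ (z.fst - K₂ u) with hx₁def
    have hxmem : WithLp.toLp 2 (x₁, x₂) ∈ T.domain :=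
      (hmemT _).mpr ⟨⟨hmem₁ _, hCb.dom_le (hmem₁ _)⟩, ⟨hBb.dom_le (hmem₂ u), hmem₂ u⟩⟩
    refine ⟨⟨WithLp.toLp 2 (x₁, x₂), hxmem⟩, ?_⟩
    have r1 : A ⟨x₁, hmem₁ (z.fst - K₂ u)⟩ - μ • x₁ = z.fst - K₂ u := hres₁ (z.fst - K₂ u)
    have r2 : B ⟨x₂, hBb.dom_le (hmem₂ u)⟩ = K₂ u := (hK₂app u).symm
    have r3 : C ⟨x₁, hCb.dom_le (hmem₁ (z.fst - K₂ u))⟩ = K₁ (z.fst - K₂ u) := (hK₁app _).symm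
    have r4 : D ⟨x₂, hmem₂ u⟩ - μ • x₂ = u := hres₂ u
    have hc1 : A ⟨x₁, hmem₁ (z.fst - K₂ u)⟩ + B ⟨x₂, hBb.dom_le (hmem₂ u)⟩ - μ • x₁ = z.fst := by
      rw [r2, add_sub_right_comm, r1]
      abel
    have hc2 : C ⟨x₁, hCb.dom_le (hmem₁ (z.fst - K₂ u))⟩ + D ⟨x₂, hmem₂ u⟩ - μ • x₂ = z.snd := by
      rw [r3, add_sub_assoc, r4, _root_.map_sub K₁]
      have hU' := hU
      rw [hwdef, sub_eq_iff_eq_add] at hU'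
      nth_rewrite 2 [hU']
      abel
    apply (WithLp.equiv 2 (H₁ × H₂)).injective
    rw [WithLp.equiv_apply, WithLp.equiv_apply, WithLp.ofLp_sub, WithLp.ofLp_smul, happT _ hxmem,
      WithLp.equiv_symm_apply, WithLp.ofLp_toLp, WithLp.ofLp_toLp]
    have hsm : μ • (((x₁, x₂) : H₁ × H₂))
        = ((μ • x₁, μ • x₂) : H₁ × H₂) := rfl
    rw [hsm]
    have hz : WithLp.ofLp z = ((z.fst, z.snd) : H₁ × H₂) := rfl
    rw [hz]
    have hpair : ((A ⟨x₁, hmem₁ (z.fst - K₂ u)⟩ + B ⟨x₂, hBb.dom_le (hmem₂ u)⟩,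
        C ⟨x₁, hCb.dom_le (hmem₁ (z.fst - K₂ u))⟩ + D ⟨x₂, hmem₂ u⟩) : H₁ × H₂)
        - ((μ • x₁, μ • x₂) : H₁ × H₂)
        = ((A ⟨x₁, hmem₁ (z.fst - K₂ u)⟩ + B ⟨x₂, hBb.dom_le (hmem₂ u)⟩ - μ • x₁,
            C ⟨x₁, hCb.dom_le (hmem₁ (z.fst - K₂ u))⟩ + D ⟨x₂, hmem₂ u⟩ - μ • x₂) : H₁ × H₂) := rfl
    show ((A ⟨x₁, hmem₁ (z.fst - K₂ u)⟩ + B ⟨x₂, hBb.dom_le (hmem₂ u)⟩,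
        C ⟨x₁, hCb.dom_le (hmem₁ (z.fst - K₂ u))⟩ + D ⟨x₂, hmem₂ u⟩) : H₁ × H₂)
        - ((μ • x₁, μ • x₂) : H₁ × H₂) = ((z.fst, z.snd) : H₁ × H₂)
    rw [hpair]
    exact Prod.ext hc1 hc2
  -- Apply the abstract self-adjointness criterion with mu = m * I
  have hre : ((m : ℂ) * Complex.I).re = 0 := by simp
  have hnorm : ‖(m : ℂ) * Complex.I‖ = m := by
    rw [norm_mul, Complex.norm_I, Complex.norm_real, mul_one, Real.norm_eq_abs,
      abs_of_pos hm0]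
  have hre' : (-((m : ℂ) * Complex.I)).re = 0 := by simp
  have hnorm' : ‖-((m : ℂ) * Complex.I)‖ = m := by rw [norm_neg, hnorm]
  have hconj : (starRingEnd ℂ) ((m : ℂ) * Complex.I) = -((m : ℂ) * Complex.I) := by
    rw [map_mul, Complex.conj_I, Complex.conj_ofReal]
    ring
  exact BlockOpAux.selfAdjoint_of_shift_surj hdense hsymT hconj
    (key _ hre hnorm)
    (fun z => by
      obtain ⟨x, hx⟩ := key _ hre' hnorm' z
      rw [neg_smul, sub_neg_eq_add] at hx
      exact ⟨x, hx⟩)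

end BlockOp
end

section
/- Let H₁, H₂ be complex Hilbert spaces, H := H₁ × H₂, and let 𝒜 = [[A, B],[C, D]] be a block operator matrix satisfying the basic assumptions, with A = A* and D = D*. Then the induced operator 𝒜 is self-adjoint if one of the following holds: (a) C is A-bounded with relative bound 0 and D(D) ⊆ D(B); (b) D(A) ⊆ D(C) and B is D-bounded with relative bound 0. -/
open LinearPMap
open scoped LinearPMap

open LinearPMap Complex Filter Topology
open scoped LinearPMap

noncomputable section
namespace SAAux

variable {E : Type*} [NormedAddCommGroup E] [InnerProductSpace ℂ E] [CompleteSpace E]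

local notation "⟪" x ", " y "⟫" => @inner ℂ _ _ x y

variable {A : E →ₗ.[ℂ] E}

lemma symm_inner (hA : IsSelfAdjoint A) (x y : A.domain) :
    ⟪A x, (y : E)⟫ = ⟪(x : E), A y⟫ := by
  have hd : Dense (A.domain : Set E) := hA.dense_domain
  have hle : A ≤ A† := le_of_eq hA.symm
  have hx' : (x : E) ∈ A†.domain := hle.1 x.2
  have hxval : A x = A† ⟨(x : E), hx'⟩ := hle.2 rfl
  have := adjoint_isFormalAdjoint hd (T := A) ⟨(x : E), hx'⟩ y
  rw [← hxval] at this
  exact this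

lemma norm_res_sq (hA : IsSelfAdjoint A) (ν : ℝ) (x : A.domain) :
    ‖A x - ((ν : ℂ) * I) • (x : E)‖ ^ 2 = ‖A x‖ ^ 2 + ν ^ 2 * ‖(x : E)‖ ^ 2 := by
  have hsym : ⟪A x, (x : E)⟫ = ⟪(x : E), A x⟫ := symm_inner hA x x
  have hre : (starRingEnd ℂ) ⟪A x, (x : E)⟫ = ⟪A x, (x : E)⟫ := by
    rw [inner_conj_symm]; exact hsym.symm
  have him : (⟪A x, (x : E)⟫).im = 0 := (Complex.conj_eq_iff_im.mp hre)
  have : ‖A x - ((ν : ℂ) * I) • (x : E)‖ ^ 2 =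
      ‖A x‖ ^ 2 - 2 * Complex.re ⟪A x, ((ν : ℂ) * I) • (x : E)⟫ + ‖((ν : ℂ) * I) • (x : E)‖ ^ 2 :=
    norm_sub_sq (𝕜 := ℂ) _ _
  rw [this, inner_smul_right]
  have h1 : Complex.re (((ν : ℂ) * I) * ⟪A x, (x : E)⟫) = 0 := by
    simp [Complex.mul_re, him]
  rw [h1, norm_smul]
  have h2 : ‖(ν : ℂ) * I‖ = |ν| := by simp [Complex.norm_def]
  rw [h2, mul_pow, _root_.sq_abs ν]
  ring

lemma graph_isClosed (hA : IsSelfAdjoint A) : IsClosed (A.graph : Set (E × E)) := by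
  have hd : Dense (A.domain : Set E) := hA.dense_domain
  have hset : (A.graph : Set (E × E)) =
      {p : E × E | ∀ x : A.domain, ⟪p.2, (x : E)⟫ = ⟪p.1, A x⟫} := by
    ext ⟨z, w⟩
    constructor
    · rintro hzw
      rw [SetLike.mem_coe, LinearPMap.mem_graph_iff] at hzw
      obtain ⟨x, hx1, hx2⟩ := hzw
      intro y
      simp only at hx1 hx2 ⊢
      rw [← hx1, ← hx2]
      exact symm_inner hA x y
    · intro hzw
      have hz : z ∈ A†.domain := mem_adjoint_domain_of_exists z ⟨w, fun x => hzw x⟩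
      have hz' : z ∈ A.domain := by rw [← isSelfAdjoint_def.mp hA]; exact hz
      have hval : A† ⟨z, hz⟩ = w := adjoint_apply_eq hd _ (fun x => hzw x)
      have hle : A† ≤ A := le_of_eq hA
      have : A† ⟨z, hz⟩ = A ⟨z, hz'⟩ := hle.2 rfl
      rw [SetLike.mem_coe, LinearPMap.mem_graph_iff]
      exact ⟨⟨z, hz'⟩, rfl, by rw [← this, hval]⟩
  rw [hset]
  have : {p : E × E | ∀ x : A.domain, ⟪p.2, (x : E)⟫ = ⟪p.1, A x⟫} =
      ⋂ x : A.domain, {p : E × E | ⟪p.2, (x : E)⟫ - ⟪p.1, A x⟫ = 0} := by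
    ext p; simp [sub_eq_zero, Set.mem_iInter]
  rw [this]
  refine isClosed_iInter fun x => isClosed_eq
    ((continuous_snd.inner continuous_const).sub (continuous_fst.inner continuous_const))
    continuous_const


lemma exists_resolvent (hA : IsSelfAdjoint A) {ν : ℝ} (hν : ν ≠ 0) :
    ∃ R : E →ₗ[ℂ] A.domain,
      (∀ y, A (R y) - ((ν : ℂ) * I) • ((R y : E)) = y) ∧
      (∀ x : A.domain, R (A x - ((ν : ℂ) * I) • (x : E)) = x) ∧
      (∀ y, ‖((R y : E))‖ ≤ ‖y‖ / |ν|) ∧ (∀ y, ‖A (R y)‖ ≤ ‖y‖) := by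
  classical
  set c : ℂ := (ν : ℂ) * I with hc
  -- lower bounds
  have hlow : ∀ (μ : ℝ) (x : A.domain),
      |μ| * ‖(x : E)‖ ≤ ‖A x - ((μ : ℂ) * I) • (x : E)‖ ∧
      ‖A x‖ ≤ ‖A x - ((μ : ℂ) * I) • (x : E)‖ := by
    intro μ x
    have h := norm_res_sq hA μ x
    constructor
    · nlinarith [norm_nonneg (A x - ((μ : ℂ) * I) • (x : E)), abs_nonneg μ,
        norm_nonneg (x : E), norm_nonneg (A x), _root_.sq_abs μ,
        mul_nonneg (abs_nonneg μ) (norm_nonneg (x : E))]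
    · nlinarith [norm_nonneg (A x - ((μ : ℂ) * I) • (x : E)), norm_nonneg (A x),
        sq_nonneg (μ * ‖(x : E)‖), _root_.sq_abs μ]
  set T : A.domain →ₗ[ℂ] E := A.toFun - c • A.domain.subtype with hTdef
  have hTapp : ∀ x : A.domain, T x = A x - c • (x : E) := fun x => rfl
  have hinj : Function.Injective T := by
    intro x y hxy
    have h0 : T (x - y) = 0 := by rw [_root_.map_sub, hxy, sub_self]
    have hb := (hlow ν (x - y)).1
    rw [← hTapp, h0] at hb
    simp only [norm_zero] at hb
    have hν' : 0 < |ν| := abs_pos.mpr hν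
    have h1 : ‖((x - y : A.domain) : E)‖ ≤ 0 := by nlinarith [norm_nonneg ((x - y : A.domain) : E)]
    have h2 : ((x : E)) = y := by
      have := norm_le_zero_iff.mp h1
      rwa [Submodule.coe_sub, sub_eq_zero] at this
    exact Subtype.ext h2
  have hgraph := graph_isClosed hA
  -- range is closed
  have hKclosed : IsClosed ((LinearMap.range T : Submodule ℂ E) : Set E) := by
    refine IsSeqClosed.isClosed ?_
    intro u p hu hup
    choose x hx using fun n => (LinearMap.mem_range.mp (hu n))
    have hucauchy : CauchySeq u := hup.cauchySeq
    have hxcauchy : CauchySeq fun n => ((x n : E)) := by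
      rw [Metric.cauchySeq_iff] at hucauchy ⊢
      intro ε hε
      have hν' : 0 < |ν| := abs_pos.mpr hν
      obtain ⟨N, hN⟩ := hucauchy (ε * |ν|) (by positivity)
      refine ⟨N, fun m hm n hn => ?_⟩
      have h1 := hN m hm n hn
      have h2 := (hlow ν (x m - x n)).1
      have h3 : T (x m - x n) = u m - u n := by rw [_root_.map_sub, hx, hx]
      rw [← hTapp, h3] at h2
      rw [dist_eq_norm] at h1 ⊢
      have : ‖((x m : E)) - ((x n : E))‖ = ‖((x m - x n : A.domain) : E)‖ := by
        simp
      rw [this]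
      calc ‖((x m - x n : A.domain) : E)‖ ≤ ‖u m - u n‖ / |ν| := by
            rw [le_div_iff₀ hν']; linarith [h2]
        _ < ε := by rw [div_lt_iff₀ hν']; linarith
    obtain ⟨ξ, hξ⟩ := cauchySeq_tendsto_of_complete hxcauchy
    have hAx : Tendsto (fun n => A (x n)) atTop (𝓝 (p + c • ξ)) := by
      have : ∀ n, A (x n) = u n + c • ((x n : E)) := by
        intro n; rw [← hx n, hTapp]; abel
      simp only [this]
      exact hup.add (hξ.const_smul c)
    have hmem : (ξ, p + c • ξ) ∈ A.graph := by
      have : Tendsto (fun n => (((x n : E)), A (x n))) atTop (𝓝 (ξ, p + c • ξ)) :=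
        hξ.prodMk_nhds hAx
      exact hgraph.mem_of_tendsto this (Filter.Eventually.of_forall fun n => A.mem_graph (x n))
    rw [LinearPMap.mem_graph_iff] at hmem
    obtain ⟨y, hy1, hy2⟩ := hmem
    refine LinearMap.mem_range.mpr ⟨y, ?_⟩
    rw [hTapp, hy2, hy1]
    simp
  -- range is everything
  have hsurj : Function.Surjective T := by
    intro y
    set K := LinearMap.range T with hK
    haveI : CompleteSpace K := hKclosed.completeSpace_coe
    obtain ⟨k, hk, z, hz, hkz⟩ := K.exists_add_mem_mem_orthogonal y
    have hz0 : z = 0 := by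
      have hzinner : ∀ x : A.domain, ⟪((starRingEnd ℂ) c) • z, (x : E)⟫ = ⟪z, A x⟫ := by
        intro x
        have h1 : ⟪T x, z⟫ = 0 := (Submodule.mem_orthogonal K z).mp hz (T x)
          (LinearMap.mem_range.mpr ⟨x, rfl⟩)
        rw [hTapp, inner_sub_left, inner_smul_left, sub_eq_zero] at h1
        have h2 : ⟪z, A x⟫ = (starRingEnd ℂ) ⟪A x, z⟫ := (inner_conj_symm _ _).symm
        simp only [h2, h1, inner_smul_left, map_mul, starRingEnd_self_apply,
          inner_conj_symm]
      have hzdom' : z ∈ A†.domain := mem_adjoint_domain_of_exists z ⟨((starRingEnd ℂ) c) • z, hzinner⟩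
      have hzdom : z ∈ A.domain := by rw [← isSelfAdjoint_def.mp hA]; exact hzdom'
      have hval : A† ⟨z, hzdom'⟩ = ((starRingEnd ℂ) c) • z :=
        adjoint_apply_eq hA.dense_domain _ hzinner
      have hAz : A ⟨z, hzdom⟩ = ((starRingEnd ℂ) c) • z := by
        have hle : A† ≤ A := le_of_eq hA
        rw [← (hle.2 (x := ⟨z, hzdom'⟩) (y := ⟨z, hzdom⟩) rfl), hval]
      have hcc : (starRingEnd ℂ) c = -c := by
        rw [hc, map_mul, Complex.conj_ofReal, Complex.conj_I]
        ring
      have hzero : A ⟨z, hzdom⟩ - (((-ν : ℝ) : ℂ) * I) • z = 0 := by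
        rw [hAz, hcc]
        have : (((-ν : ℝ) : ℂ) * I) = -c := by push_cast [hc]; ring
        rw [this]
        abel
      have := (hlow (-ν) ⟨z, hzdom⟩).1
      rw [hzero] at this
      simp only [norm_zero, abs_neg] at this
      have hν' : 0 < |ν| := abs_pos.mpr hν
      have : ‖z‖ = 0 := by nlinarith [norm_nonneg z]
      exact norm_eq_zero.mp this
    rw [hz0, add_zero] at hkz
    obtain ⟨x, hx⟩ := LinearMap.mem_range.mp hk
    exact ⟨x, by rw [hx, hkz]⟩
  set e := LinearEquiv.ofBijective T ⟨hinj, hsurj⟩ with he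
  refine ⟨e.symm.toLinearMap, ?_, ?_, ?_, ?_⟩
  · intro y
    have : T (e.symm y) = y := e.apply_symm_apply y
    rw [hTapp] at this
    exact this
  · intro x
    have h1 : e x = T x := rfl
    rw [← hTapp x, ← h1]
    exact e.symm_apply_apply x
  · intro y
    have h := (hlow ν (e.symm y)).1
    rw [← hTapp] at h
    have : T (e.symm y) = y := e.apply_symm_apply y
    rw [this] at h
    have hν' : 0 < |ν| := abs_pos.mpr hν
    rw [le_div_iff₀ hν']
    simp only [LinearEquiv.coe_coe] at *
    linarith
  · intro y
    have h := (hlow ν (e.symm y)).2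
    rw [← hTapp] at h
    have : T (e.symm y) = y := e.apply_symm_apply y
    rwa [this] at h


set_option synthInstance.maxHeartbeats 1000000 in
set_option maxHeartbeats 1000000 in
lemma relbound_of_dom_le {F : Type*} [NormedAddCommGroup F] [InnerProductSpace ℂ F]
    [CompleteSpace F] {T : E →ₗ.[ℂ] E} {S : E →ₗ.[ℂ] F}
    (hT : IsSelfAdjoint T) (hS : S.IsClosable) (hle : T.domain ≤ S.domain) :
    ∃ M : ℝ, 0 ≤ M ∧ ∀ x : T.domain, ‖S ⟨(x : E), hle x.2⟩‖ ≤ M * ‖(x : E)‖ + M * ‖T x‖ := by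
  have hgraph : IsClosed (T.graph : Set (E × E)) := graph_isClosed hT
  haveI : CompleteSpace T.graph := hgraph.completeSpace_coe
  have hmem : ∀ p : T.graph, (p : E × E).1 ∈ T.domain := fun p =>
    T.mem_domain_of_mem_graph p.2
  set ψ : T.graph →ₗ[ℂ] S.domain :=
    { toFun := fun p => ⟨(p : E × E).1, hle (hmem p)⟩
      map_add' := fun p q => Subtype.ext rfl
      map_smul' := fun a p => Subtype.ext rfl } with hψ
  set φ : T.graph →ₗ[ℂ] F := S.toFun ∘ₗ ψ with hφ
  have hseq : ∀ (u : ℕ → T.graph) (x : T.graph) (y : F),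
      Tendsto u atTop (𝓝 x) → Tendsto (⇑φ ∘ u) atTop (𝓝 y) → y = φ x := by
    intro u x y hux hφy
    have h1 : Tendsto (fun n => ((u n : E × E)).1) atTop (𝓝 ((x : E × E).1)) :=
      (continuous_fst.comp continuous_subtype_val).continuousAt.tendsto.comp hux
    have hpair : Tendsto (fun n => (((u n : E × E)).1, φ (u n))) atTop
        (𝓝 (((x : E × E)).1, y)) := h1.prodMk_nhds hφy
    have hmemgraph : ∀ n, (((u n : E × E)).1, φ (u n)) ∈ S.graph := by
      intro n
      exact S.mem_graph ⟨((u n : E × E)).1, hle (hmem (u n))⟩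
    have hclos : (((x : E × E)).1, y) ∈ S.graph.topologicalClosure := by
      have : (((x : E × E)).1, y) ∈ closure (S.graph : Set (E × F)) :=
        mem_closure_of_tendsto hpair (Filter.Eventually.of_forall hmemgraph)
      exact this
    rw [hS.graph_closure_eq_closure_graph] at hclos
    rw [LinearPMap.mem_graph_iff] at hclos
    obtain ⟨v, hv1, hv2⟩ := hclos
    have hxdom : ((x : E × E)).1 ∈ S.domain := hle (hmem x)
    have : S.closure ⟨((x : E × E)).1, hv1 ▸ v.2⟩ = S ⟨((x : E × E)).1, hxdom⟩ :=
      (S.le_closure.2 rfl).symm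
    have hveq : v = ⟨((x : E × E)).1, hv1 ▸ v.2⟩ := Subtype.ext hv1
    have hv2' : S.closure v = y := hv2
    rw [← hv2', hveq, this]
    rfl
  set Φ := ContinuousLinearMap.ofSeqClosedGraph hseq with hΦ
  refine ⟨max ‖Φ‖ 1, le_trans zero_le_one (le_max_right _ _), fun x => ?_⟩
  have hx : (⟨((x : E), T x), T.mem_graph x⟩ : T.graph) ∈ Set.univ := trivial
  set p : T.graph := ⟨((x : E), T x), T.mem_graph x⟩ with hp
  have h1 : ‖Φ p‖ ≤ ‖Φ‖ * ‖p‖ := Φ.le_opNorm p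
  have h2 : Φ p = S ⟨(x : E), hle x.2⟩ := by
    rw [ContinuousLinearMap.coeFn_ofSeqClosedGraph]
    rfl
  have h3 : ‖p‖ ≤ ‖(x : E)‖ + ‖T x‖ := by
    have : ‖p‖ = max ‖(x : E)‖ ‖T x‖ := rfl
    rw [this]
    exact max_le (le_add_of_nonneg_right (norm_nonneg _))
      (le_add_of_nonneg_left (norm_nonneg _))
  rw [h2] at h1
  have hΦnn : (0:ℝ) ≤ ‖Φ‖ := norm_nonneg _
  calc ‖S ⟨(x : E), hle x.2⟩‖ ≤ ‖Φ‖ * (‖(x : E)‖ + ‖T x‖) :=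
        h1.trans (by gcongr)
    _ ≤ max ‖Φ‖ 1 * ‖(x : E)‖ + max ‖Φ‖ 1 * ‖T x‖ := by
        have h4 := le_max_left ‖Φ‖ 1
        nlinarith [norm_nonneg ((x : E)), norm_nonneg (T x)]

lemma isSelfAdjoint_of_symm_surj {T : E →ₗ.[ℂ] E} (hd : Dense (T.domain : Set E))
    (hsym : T.IsFormalAdjoint T) {μ : ℝ} (hμ : μ ≠ 0)
    (hsurj : ∀ ν : ℝ, (ν = μ ∨ ν = -μ) →
      ∀ y : E, ∃ x : T.domain, T x - ((ν : ℂ) * I) • (x : E) = y) :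
    IsSelfAdjoint T := by
  set c : ℂ := (μ : ℂ) * I with hc
  have hcc : (starRingEnd ℂ) c = -c := by
    rw [hc, map_mul, Complex.conj_ofReal, Complex.conj_I]; ring
  have hle : T ≤ T† := hsym.le_adjoint hd
  have key : ∀ z : T†.domain, ∃ x : T.domain, ((x : E)) = (z : E) ∧ T x = T† z := by
    intro z
    set w : E := T† z with hw
    obtain ⟨x, hx⟩ := hsurj μ (Or.inl rfl) (w - c • (z : E))
    have hxd : (x : E) ∈ T†.domain := hle.1 x.2
    have hTx : T x = T† ⟨(x : E), hxd⟩ := hle.2 rfl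
    -- the element g = z - x in the adjoint domain
    set g : T†.domain := z - ⟨(x : E), hxd⟩ with hg
    have hgval : T† g = c • ((g : E)) := by
      rw [hg, LinearPMap.map_sub, ← hTx, ← hw]
      have : T x = w - c • (z : E) + c • ((x : E)) := by
        rw [← hx]; abel
      rw [this]
      simp only [AddSubgroupClass.coe_sub]
      rw [smul_sub]
      abel
    have hzero : ∀ y : E, ⟪((g : E)), y⟫ = 0 := by
      intro y
      obtain ⟨v, hv⟩ := hsurj (-μ) (Or.inr rfl) y
      have hmc : (((-μ : ℝ) : ℂ) * I) = -c := by rw [hc]; push_cast; ring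
      have hv' : T v + c • ((v : E)) = y := by
        rw [hmc, neg_smul, sub_neg_eq_add] at hv
        exact hv
      rw [← hv']
      rw [inner_add_right, inner_smul_right]
      have hform := adjoint_isFormalAdjoint hd (T := T) g v
      rw [hgval] at hform
      rw [← hform, inner_smul_left, hcc]
      ring
    have hg0 : ((g : E)) = 0 := by
      have := hzero ((g : E))
      exact inner_self_eq_zero.mp this
    have hzx : (z : E) = ((x : E)) := by
      have : (z : E) - ((x : E)) = 0 := hg0
      linear_combination (norm := module) this
    refine ⟨x, hzx.symm, ?_⟩
    have : T† g = 0 := by rw [hgval, hg0, smul_zero]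
    rw [hg, LinearPMap.map_sub, ← hTx] at this
    have := sub_eq_zero.mp this
    rw [← this, hw]
  have hge : T† ≤ T := by
    constructor
    · intro z hz
      obtain ⟨x, hx1, _⟩ := key ⟨z, hz⟩
      have hx1' : ((x : E)) = z := hx1
      exact hx1' ▸ x.2
    · intro a b hab
      obtain ⟨x, hx1, hx2⟩ := key a
      have : b = x := Subtype.ext (by rw [← hab, hx1])
      rw [this, hx2]
  exact isSelfAdjoint_def.mpr (le_antisymm hge hle)


section Core

variable {H₁ H₂ : Type*}
  [NormedAddCommGroup H₁] [InnerProductSpace ℂ H₁] [CompleteSpace H₁]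
  [NormedAddCommGroup H₂] [InnerProductSpace ℂ H₂] [CompleteSpace H₂]

set_option maxHeartbeats 1600000 in
lemma surj_core (A : H₁ →ₗ.[ℂ] H₁) (B : H₂ →ₗ.[ℂ] H₁) (C : H₁ →ₗ.[ℂ] H₂) (D : H₂ →ₗ.[ℂ] H₂)
    (hA : IsSelfAdjoint A) (hD : IsSelfAdjoint D)
    (hAC : A.domain ≤ C.domain) (hDB : D.domain ≤ B.domain)
    (hC0 : ∀ b : ℝ, 0 < b → ∃ a : ℝ, 0 ≤ a ∧
      ∀ x : A.domain, ‖C ⟨(x : H₁), hAC x.2⟩‖ ≤ a * ‖(x : H₁)‖ + b * ‖A x‖)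
    {a₀ b₀ : ℝ} (ha₀ : 0 ≤ a₀) (hb₀ : 0 ≤ b₀)
    (hB : ∀ x : D.domain, ‖B ⟨(x : H₂), hDB x.2⟩‖ ≤ a₀ * ‖(x : H₂)‖ + b₀ * ‖D x‖) :
    ∃ μ : ℝ, 0 < μ ∧ ∀ ν : ℝ, |ν| = μ → ∀ y₁ y₂,
      ∃ (x₁ : A.domain) (x₂ : D.domain),
        A x₁ + B ⟨(x₂ : H₂), hDB x₂.2⟩ - ((ν : ℂ) * I) • ((x₁ : H₁)) = y₁ ∧
        C ⟨(x₁ : H₁), hAC x₁.2⟩ + D x₂ - ((ν : ℂ) * I) • ((x₂ : H₂)) = y₂ := by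
  set c₀ : ℝ := a₀ + b₀ + 1 with hc₀
  have hc₀pos : 0 < c₀ := by positivity
  obtain ⟨a, ha, hCb⟩ := hC0 (1 / (2 * c₀)) (by positivity)
  set μ : ℝ := max 1 (2 * a * c₀) with hμdef
  have hμ1 : 1 ≤ μ := le_max_left _ _
  have hμpos : 0 < μ := lt_of_lt_of_le one_pos hμ1
  have hμa : 2 * a * c₀ ≤ μ := le_max_right _ _
  refine ⟨μ, hμpos, fun ν hν y₁ y₂ => ?_⟩
  have hν0 : ν ≠ 0 := by
    intro h
    rw [h, abs_zero] at hν
    exact absurd hν.symm (ne_of_gt hμpos)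
  obtain ⟨RA, hRA1, _, hRA2, hRA3⟩ := exists_resolvent hA hν0
  obtain ⟨RD, hRD1, _, hRD2, hRD3⟩ := exists_resolvent hD hν0
  rw [hν] at hRA2 hRD2
  set c : ℂ := (ν : ℂ) * I with hc
  set β : D.domain →ₗ[ℂ] H₁ := B.toFun ∘ₗ Submodule.inclusion hDB with hβdef
  set γ : A.domain →ₗ[ℂ] H₂ := C.toFun ∘ₗ Submodule.inclusion hAC with hγdef
  have hβ : ∀ x : D.domain, β x = B ⟨(x : H₂), hDB x.2⟩ := fun _ => rfl
  have hγ : ∀ x : A.domain, γ x = C ⟨(x : H₁), hAC x.2⟩ := fun _ => rfl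
  set G : H₂ →ₗ[ℂ] H₂ := γ ∘ₗ (RA ∘ₗ (β ∘ₗ RD)) with hGdef
  have hGapp : ∀ u, G u = γ (RA (β (RD u))) := fun _ => rfl
  set K : ℝ := (a₀ + b₀) / c₀ with hK
  have hK0 : 0 ≤ K := by positivity
  have hK1 : K < 1 := by
    rw [hK, div_lt_one hc₀pos, hc₀]
    linarith
  have hGb : ∀ u, ‖G u‖ ≤ K * ‖u‖ := by
    intro u
    have h1 : ‖((RD u : H₂))‖ ≤ ‖u‖ / μ := hRD2 u
    have h2 : ‖D (RD u)‖ ≤ ‖u‖ := hRD3 u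
    have hw : ‖β (RD u)‖ ≤ (a₀ + b₀) * ‖u‖ := by
      rw [hβ]
      calc ‖B ⟨((RD u : H₂)), hDB (RD u).2⟩‖ ≤ a₀ * ‖((RD u : H₂))‖ + b₀ * ‖D (RD u)‖ :=
            hB (RD u)
        _ ≤ a₀ * ‖u‖ + b₀ * ‖u‖ := by
            have h3 : ‖u‖ / μ ≤ ‖u‖ := by
              rw [div_le_iff₀ hμpos]
              nlinarith [norm_nonneg u]
            have := h1.trans h3
            gcongr
        _ = (a₀ + b₀) * ‖u‖ := by ring
    set w := β (RD u) with hwdef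
    have h4 : ‖((RA w : H₁))‖ ≤ ‖w‖ / μ := hRA2 w
    have h5 : ‖A (RA w)‖ ≤ ‖w‖ := hRA3 w
    have h6 : ‖G u‖ ≤ a * ‖((RA w : H₁))‖ + (1 / (2 * c₀)) * ‖A (RA w)‖ := by
      rw [hGapp, hγ]
      exact hCb (RA w)
    have hdiv : a / μ ≤ 1 / (2 * c₀) := by
      rw [div_le_div_iff₀ hμpos (by positivity)]
      nlinarith
    have h7 : a * ‖((RA w : H₁))‖ ≤ (1 / (2 * c₀)) * ‖w‖ := by
      calc a * ‖((RA w : H₁))‖ ≤ a * (‖w‖ / μ) := by gcongr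
        _ = (a / μ) * ‖w‖ := by ring
        _ ≤ (1 / (2 * c₀)) * ‖w‖ := by gcongr
    have h8 : ‖G u‖ ≤ (1 / c₀) * ‖w‖ := by
      have : (1 / (2 * c₀)) * ‖A (RA w)‖ ≤ (1 / (2 * c₀)) * ‖w‖ := by gcongr
      calc ‖G u‖ ≤ a * ‖((RA w : H₁))‖ + (1 / (2 * c₀)) * ‖A (RA w)‖ := h6
        _ ≤ (1 / (2 * c₀)) * ‖w‖ + (1 / (2 * c₀)) * ‖w‖ := by linarith
        _ = (1 / c₀) * ‖w‖ := by rw [hc₀]; field_simp; ring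
    calc ‖G u‖ ≤ (1 / c₀) * ‖w‖ := h8
      _ ≤ (1 / c₀) * ((a₀ + b₀) * ‖u‖) := by gcongr
      _ = K * ‖u‖ := by rw [hK]; ring
  set Gc : H₂ →L[ℂ] H₂ := G.mkContinuous K hGb with hGc
  have hGcapp : ∀ u, Gc u = G u := fun _ => rfl
  have hGcnorm : ‖Gc‖ < 1 := lt_of_le_of_lt (G.mkContinuous_norm_le hK0 hGb) hK1
  set un : (H₂ →L[ℂ] H₂)ˣ := Units.oneSub Gc hGcnorm with hun
  have hunval : (un : H₂ →L[ℂ] H₂) = 1 - Gc := rfl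
  -- construct the solution
  set ty : H₂ := y₂ - γ (RA y₁) with hty
  set u : H₂ := ((↑un⁻¹ : H₂ →L[ℂ] H₂)) ty with hu
  have huy : u - G u = ty := by
    have h1 : ((un : H₂ →L[ℂ] H₂) * (↑un⁻¹ : H₂ →L[ℂ] H₂)) ty = ty := by
      rw [un.mul_inv]; rfl
    rw [ContinuousLinearMap.mul_apply, hunval] at h1
    rw [← hu] at h1
    rw [ContinuousLinearMap.sub_apply, ContinuousLinearMap.one_apply] at h1
    rw [← hGcapp u]
    exact h1
  set x₂ : D.domain := RD u with hx₂
  set x₁ : A.domain := RA (y₁ - β x₂) with hx₁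
  refine ⟨x₁, x₂, ?_, ?_⟩
  · have h1 : A x₁ - c • ((x₁ : H₁)) = y₁ - β x₂ := hRA1 (y₁ - β x₂)
    rw [← hβ x₂]
    have h2 : A x₁ + β x₂ - c • ((x₁ : H₁)) = (A x₁ - c • ((x₁ : H₁))) + β x₂ := by abel
    rw [hc] at h2 ⊢
    rw [h2, h1]
    abel
  · have h1 : D x₂ - c • ((x₂ : H₂)) = u := hRD1 u
    have h2 : γ x₁ = γ (RA y₁) - G u := by
      rw [hx₁, _root_.map_sub, _root_.map_sub, hGapp, hx₂]
    have h3 : C ⟨(x₁ : H₁), hAC x₁.2⟩ + D x₂ - c • ((x₂ : H₂)) =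
        γ x₁ + (D x₂ - c • ((x₂ : H₂))) := by
      rw [hγ]; abel
    rw [hc] at h3 ⊢
    rw [h3, h1, h2]
    have h4 : γ (RA y₁) - G u + u = γ (RA y₁) + (u - G u) := by abel
    rw [h4, huy, hty]
    abel

end Core

end SAAux

namespace BlockOp

section Plumb

variable {H₁ H₂ : Type*}
  [NormedAddCommGroup H₁] [InnerProductSpace ℂ H₁] [CompleteSpace H₁]
  [NormedAddCommGroup H₂] [InnerProductSpace ℂ H₂] [CompleteSpace H₂]
  (A : H₁ →ₗ.[ℂ] H₁) (B : H₂ →ₗ.[ℂ] H₁) (C : H₁ →ₗ.[ℂ] H₂) (D : H₂ →ₗ.[ℂ] H₂)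

local notation "⟪" x ", " y "⟫" => @inner ℂ _ _ x y

lemma mem_blockOpL_domain {x : WithLp 2 (H₁ × H₂)} :
    x ∈ (blockOpL A B C D).domain ↔
      ((x.ofLp.1 ∈ A.domain ∧ x.ofLp.1 ∈ C.domain) ∧ (x.ofLp.2 ∈ B.domain ∧ x.ofLp.2 ∈ D.domain)) := by
  constructor
  · intro h
    exact ⟨⟨h.1.1, h.1.2⟩, ⟨h.2.1, h.2.2⟩⟩
  · intro h
    exact ⟨⟨h.1.1, h.1.2⟩, ⟨h.2.1, h.2.2⟩⟩

lemma blockOpL_apply (x : (blockOpL A B C D).domain)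
    (h1 : ((x : WithLp 2 (H₁ × H₂)).ofLp.1 : H₁) ∈ A.domain)
    (h2 : ((x : WithLp 2 (H₁ × H₂)).ofLp.2 : H₂) ∈ B.domain)
    (h3 : ((x : WithLp 2 (H₁ × H₂)).ofLp.1 : H₁) ∈ C.domain)
    (h4 : ((x : WithLp 2 (H₁ × H₂)).ofLp.2 : H₂) ∈ D.domain) :
    blockOpL A B C D x =
      (WithLp.equiv 2 (H₁ × H₂)).symm
        (A ⟨(x : WithLp 2 (H₁ × H₂)).ofLp.1, h1⟩ + B ⟨(x : WithLp 2 (H₁ × H₂)).ofLp.2, h2⟩,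
         C ⟨(x : WithLp 2 (H₁ × H₂)).ofLp.1, h3⟩ + D ⟨(x : WithLp 2 (H₁ × H₂)).ofLp.2, h4⟩) := rfl

open scoped LinearPMap in
lemma cross_inner (hCd : Dense (C.domain : Set H₁)) (hBC : B ≤ C.adjoint)
    (w : B.domain) (v : C.domain) : ⟪B w, (v : H₁)⟫ = ⟪(w : H₂), C v⟫ := by
  have hw' : (w : H₂) ∈ C.adjoint.domain := hBC.1 w.2
  have hval : B w = C.adjoint ⟨(w : H₂), hw'⟩ := hBC.2 rfl
  rw [hval]
  exact LinearPMap.adjoint_isFormalAdjoint hCd ⟨(w : H₂), hw'⟩ v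

open scoped LinearPMap in
lemma blockOpL_symmetric (hAd : Dense (A.domain : Set H₁)) (hCd : Dense (C.domain : Set H₁))
    (hDd : Dense (D.domain : Set H₂))
    (hAsym : A ≤ A.adjoint) (hBC : B ≤ C.adjoint) (hDsym : D ≤ D.adjoint) :
    (blockOpL A B C D).IsFormalAdjoint (blockOpL A B C D) := by
  intro x y
  obtain ⟨⟨hxA, hxC⟩, hxB, hxD⟩ := (mem_blockOpL_domain A B C D).mp x.2
  obtain ⟨⟨hyA, hyC⟩, hyB, hyD⟩ := (mem_blockOpL_domain A B C D).mp y.2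
  rw [blockOpL_apply A B C D x hxA hxB hxC hxD, blockOpL_apply A B C D y hyA hyB hyC hyD]
  rw [WithLp.prod_inner_apply, WithLp.prod_inner_apply]
  have e1 : ((WithLp.equiv 2 (H₁ × H₂)).symm
      (A ⟨(x : WithLp 2 (H₁ × H₂)).ofLp.1, hxA⟩ + B ⟨(x : WithLp 2 (H₁ × H₂)).ofLp.2, hxB⟩,
       C ⟨(x : WithLp 2 (H₁ × H₂)).ofLp.1, hxC⟩ + D ⟨(x : WithLp 2 (H₁ × H₂)).ofLp.2, hxD⟩)).ofLp.1 =
      A ⟨(x : WithLp 2 (H₁ × H₂)).ofLp.1, hxA⟩ + B ⟨(x : WithLp 2 (H₁ × H₂)).ofLp.2, hxB⟩ := rfl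
  have hAA : ∀ (u : A.domain) (v : A.domain), ⟪A u, (v : H₁)⟫ = ⟪(u : H₁), A v⟫ := by
    intro u v
    have hu' : (u : H₁) ∈ A.adjoint.domain := hAsym.1 u.2
    have hval : A u = A.adjoint ⟨(u : H₁), hu'⟩ := hAsym.2 rfl
    rw [hval]
    exact LinearPMap.adjoint_isFormalAdjoint hAd ⟨(u : H₁), hu'⟩ v
  have hDD : ∀ (u : D.domain) (v : D.domain), ⟪D u, (v : H₂)⟫ = ⟪(u : H₂), D v⟫ := by
    intro u v
    have hu' : (u : H₂) ∈ D.adjoint.domain := hDsym.1 u.2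
    have hval : D u = D.adjoint ⟨(u : H₂), hu'⟩ := hDsym.2 rfl
    rw [hval]
    exact LinearPMap.adjoint_isFormalAdjoint hDd ⟨(u : H₂), hu'⟩ v
  have hBCi := cross_inner B C hCd hBC
  show ⟪A ⟨_, hxA⟩ + B ⟨_, hxB⟩, (y : WithLp 2 (H₁ × H₂)).ofLp.1⟫ +
      ⟪C ⟨_, hxC⟩ + D ⟨_, hxD⟩, (y : WithLp 2 (H₁ × H₂)).ofLp.2⟫ =
      ⟪(x : WithLp 2 (H₁ × H₂)).ofLp.1, A ⟨_, hyA⟩ + B ⟨_, hyB⟩⟫ +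
      ⟪(x : WithLp 2 (H₁ × H₂)).ofLp.2, C ⟨_, hyC⟩ + D ⟨_, hyD⟩⟫
  rw [inner_add_left, inner_add_left, inner_add_right, inner_add_right]
  have t1 : ⟪A ⟨_, hxA⟩, (y : WithLp 2 (H₁ × H₂)).ofLp.1⟫ =
      ⟪(x : WithLp 2 (H₁ × H₂)).ofLp.1, A ⟨(y : WithLp 2 (H₁ × H₂)).ofLp.1, hyA⟩⟫ :=
    hAA ⟨_, hxA⟩ ⟨_, hyA⟩
  have t2 : ⟪D ⟨_, hxD⟩, (y : WithLp 2 (H₁ × H₂)).ofLp.2⟫ =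
      ⟪(x : WithLp 2 (H₁ × H₂)).ofLp.2, D ⟨(y : WithLp 2 (H₁ × H₂)).ofLp.2, hyD⟩⟫ :=
    hDD ⟨_, hxD⟩ ⟨_, hyD⟩
  have t3 : ⟪B ⟨_, hxB⟩, (y : WithLp 2 (H₁ × H₂)).ofLp.1⟫ =
      ⟪(x : WithLp 2 (H₁ × H₂)).ofLp.2, C ⟨(y : WithLp 2 (H₁ × H₂)).ofLp.1, hyC⟩⟫ :=
    hBCi ⟨_, hxB⟩ ⟨_, hyC⟩
  have t4 : ⟪C ⟨_, hxC⟩, (y : WithLp 2 (H₁ × H₂)).ofLp.2⟫ =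
      ⟪(x : WithLp 2 (H₁ × H₂)).ofLp.1, B ⟨(y : WithLp 2 (H₁ × H₂)).ofLp.2, hyB⟩⟫ := by
    rw [← inner_conj_symm, ← hBCi ⟨_, hyB⟩ ⟨_, hxC⟩, inner_conj_symm]
  rw [t1, t2, t3, t4]
  ring

end Plumb

end BlockOp

namespace BlockOp

open SAAux Complex in
theorem statement14 {H₁ H₂ : Type*}
    [NormedAddCommGroup H₁] [InnerProductSpace ℂ H₁] [CompleteSpace H₁]
    [NormedAddCommGroup H₂] [InnerProductSpace ℂ H₂] [CompleteSpace H₂]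
    (A : H₁ →ₗ.[ℂ] H₁) (B : H₂ →ₗ.[ℂ] H₁) (C : H₁ →ₗ.[ℂ] H₂) (D : H₂ →ₗ.[ℂ] H₂)
    (hAd : Dense (A.domain : Set H₁)) (hBd : Dense (B.domain : Set H₂))
    (hCd : Dense (C.domain : Set H₁)) (hDd : Dense (D.domain : Set H₂))
    (hAc : A.IsClosable) (hBc : B.IsClosable) (hCc : C.IsClosable) (hDc : D.IsClosable)
    (hAsym : A ≤ A.adjoint) (hBC : B ≤ C.adjoint) (hDsym : D ≤ D.adjoint)
    (hdense : Dense ((blockOpL A B C D).domain : Set (WithLp 2 (H₁ × H₂))))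
    (hA : IsSelfAdjoint A) (hD : IsSelfAdjoint D)
    (h : (IsRelBoundedLe C A 0 ∧ D.domain ≤ B.domain) ∨
         (A.domain ≤ C.domain ∧ IsRelBoundedLe B D 0)) :
    IsSelfAdjoint (blockOpL A B C D) := by
  -- unified surjectivity statement
  have main : ∃ μ : ℝ, 0 < μ ∧ ∀ ν : ℝ, |ν| = μ → ∀ (y₁ : H₁) (y₂ : H₂),
      ∃ (x₁ : A.domain) (x₂ : D.domain) (hc1 : ((x₁ : H₁)) ∈ C.domain)
        (hb1 : ((x₂ : H₂)) ∈ B.domain),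
        A x₁ + B ⟨(x₂ : H₂), hb1⟩ - ((ν : ℂ) * I) • ((x₁ : H₁)) = y₁ ∧
        C ⟨(x₁ : H₁), hc1⟩ + D x₂ - ((ν : ℂ) * I) • ((x₂ : H₂)) = y₂ := by
    rcases h with ⟨hC0, hDB⟩ | ⟨hAC, hB0⟩
    · obtain ⟨a1, ha1, hR1⟩ := hC0 1 one_pos
      have hAC : A.domain ≤ C.domain := hR1.dom_le
      obtain ⟨M, hM, hMb⟩ := relbound_of_dom_le hD hBc hDB
      have hC0' : ∀ b : ℝ, 0 < b → ∃ a : ℝ, 0 ≤ a ∧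
          ∀ x : A.domain, ‖C ⟨(x : H₁), hAC x.2⟩‖ ≤ a * ‖(x : H₁)‖ + b * ‖A x‖ := by
        intro b hb
        obtain ⟨a, ha, hR⟩ := hC0 b hb
        exact ⟨a, ha, fun x => hR.bound x⟩
      obtain ⟨μ, hμpos, hsurj⟩ := surj_core A B C D hA hD hAC hDB hC0' hM hM hMb
      exact ⟨μ, hμpos, fun ν hν y₁ y₂ => by
        obtain ⟨x₁, x₂, h1, h2⟩ := hsurj ν hν y₁ y₂
        exact ⟨x₁, x₂, hAC x₁.2, hDB x₂.2, h1, h2⟩⟩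
    · obtain ⟨a1, ha1, hR1⟩ := hB0 1 one_pos
      have hDB : D.domain ≤ B.domain := hR1.dom_le
      obtain ⟨M, hM, hMb⟩ := relbound_of_dom_le hA hCc hAC
      have hB0' : ∀ b : ℝ, 0 < b → ∃ a : ℝ, 0 ≤ a ∧
          ∀ x : D.domain, ‖B ⟨(x : H₂), hDB x.2⟩‖ ≤ a * ‖(x : H₂)‖ + b * ‖D x‖ := by
        intro b hb
        obtain ⟨a, ha, hR⟩ := hB0 b hb
        exact ⟨a, ha, fun x => hR.bound x⟩
      obtain ⟨μ, hμpos, hsurj⟩ := surj_core D C B A hD hA hDB hAC hB0' hM hM hMb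
      exact ⟨μ, hμpos, fun ν hν y₁ y₂ => by
        obtain ⟨x₂, x₁, h2, h1⟩ := hsurj ν hν y₂ y₁
        refine ⟨x₁, x₂, hAC x₁.2, hDB x₂.2, ?_, ?_⟩
        · rw [add_comm]; exact h1
        · rw [add_comm]; exact h2⟩
  obtain ⟨μ, hμpos, hsurj⟩ := main
  have hsym : (blockOpL A B C D).IsFormalAdjoint (blockOpL A B C D) :=
    blockOpL_symmetric A B C D hAd hCd hDd hAsym hBC hDsym
  refine isSelfAdjoint_of_symm_surj hdense hsym (μ := μ) (ne_of_gt hμpos) ?_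
  intro ν hνcase y
  have hν : |ν| = μ := by
    rcases hνcase with h | h
    · rw [h]; exact abs_of_pos hμpos
    · rw [h, abs_neg]; exact abs_of_pos hμpos
  obtain ⟨x₁, x₂, hc1, hb1, h1, h2⟩ := hsurj ν hν y.ofLp.1 y.ofLp.2
  set x : WithLp 2 (H₁ × H₂) := (WithLp.equiv 2 (H₁ × H₂)).symm (((x₁ : H₁)), ((x₂ : H₂)))
    with hx
  have hxmem : x ∈ (blockOpL A B C D).domain := by
    rw [mem_blockOpL_domain]
    exact ⟨⟨x₁.2, hc1⟩, ⟨hb1, x₂.2⟩⟩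
  refine ⟨⟨x, hxmem⟩, ?_⟩
  have happ := blockOpL_apply A B C D ⟨x, hxmem⟩ x₁.2 hb1 hc1 x₂.2
  rw [happ]
  have hgoal1 : ((WithLp.equiv 2 (H₁ × H₂)).symm
      (A ⟨_, x₁.2⟩ + B ⟨_, hb1⟩, C ⟨_, hc1⟩ + D ⟨_, x₂.2⟩) -
        ((ν : ℂ) * I) • x).ofLp.1 = y.ofLp.1 := by
    show A x₁ + B ⟨(x₂ : H₂), hb1⟩ - ((ν : ℂ) * I) • ((x₁ : H₁)) = y.ofLp.1
    exact h1
  have hgoal2 : ((WithLp.equiv 2 (H₁ × H₂)).symm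
      (A ⟨_, x₁.2⟩ + B ⟨_, hb1⟩, C ⟨_, hc1⟩ + D ⟨_, x₂.2⟩) -
        ((ν : ℂ) * I) • x).ofLp.2 = y.ofLp.2 := by
    show C ⟨(x₁ : H₁), hc1⟩ + D x₂ - ((ν : ℂ) * I) • ((x₂ : H₂)) = y.ofLp.2
    exact h2
  exact (WithLp.equiv 2 (H₁ × H₂)).injective (Prod.ext hgoal1 hgoal2)

end BlockOp
end
end

section
/- Let H be a complex Hilbert space and let 𝒜 = [[A, B],[B*, D]] be a block operator matrix on H × H satisfying the basic assumptions with C = B*. Suppose B is closed with nonempty resolvent set ρ(B) and D(𝒜) = D(B*) × D(B) (i.e., D(B*) ⊆ D(A) and D(B) ⊆ D(D)). Then the following are equivalent: (a) the induced operator 𝒜 is self-adjoint; (b) there exists λ ∈ ρ(B) with (B − A(B*−λ̄)⁻¹D)* = B* − D(B−λ)⁻¹A; (c) there exists λ ∈ ρ(B) with (B* − D(B−λ)⁻¹A)* = B − A(B*−λ̄)⁻¹D. Moreover, if (b) or (c) holds for some λ ∈ ρ(B), it holds for every λ ∈ ρ(B). -/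
open LinearPMap
open scoped LinearPMap

namespace BlockOp

section Aux

variable {H : Type*} [NormedAddCommGroup H] [InnerProductSpace ℂ H] [CompleteSpace H]

local notation "⟪" x ", " y "⟫" => @inner ℂ _ _ x y

open scoped ComplexConjugate

variable {B : H →ₗ.[ℂ] H} {lam : ℂ} {R S : H →L[ℂ] H}

theorem IsResolventAt.map_res (hR : IsResolventAt B lam R) (y : H) :
    B ⟨R y, hR.mem y⟩ = y + lam • R y :=
  sub_eq_iff_eq_add.mp (hR.right_inv y)

theorem IsResolventAt.res_map (hR : IsResolventAt B lam R) {x : H} (hx : x ∈ B.domain) :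
    R (B ⟨x, hx⟩ - lam • x) = x := hR.left_inv ⟨x, hx⟩

/-- `⟪R w, z⟫ = ⟪w, S z⟫` : the resolvent of the adjoint is the adjoint of the resolvent. -/
theorem inner_res_res (hBd : Dense (B.domain : Set H)) (hR : IsResolventAt B lam R)
    (hS : IsResolventAt B.adjoint (conj lam) S) (w z : H) : ⟪R w, z⟫ = ⟪w, S z⟫ := by
  have h1 : z = B.adjoint ⟨S z, hS.mem z⟩ - conj lam • S z := (hS.right_inv z).symm
  have h2 : ⟪B.adjoint ⟨S z, hS.mem z⟩, (⟨R w, hR.mem w⟩ : B.domain)⟫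
      = ⟪S z, B ⟨R w, hR.mem w⟩⟫ := adjoint_isFormalAdjoint hBd ⟨S z, hS.mem z⟩ ⟨R w, hR.mem w⟩
  have h3 : ⟪R w, B.adjoint ⟨S z, hS.mem z⟩⟫ = ⟪B ⟨R w, hR.mem w⟩, S z⟫ := by
    rw [← inner_conj_symm, h2, inner_conj_symm]
  have h4 : ⟪R w, z⟫ = ⟪R w, B.adjoint ⟨S z, hS.mem z⟩⟫ - conj lam * ⟪R w, S z⟫ := by
    conv_lhs => rw [h1]
    rw [inner_sub_right, inner_smul_right]
  rw [h4, h3, hR.map_res w, inner_add_left, inner_smul_left]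
  ring

theorem inner_res_res' (hBd : Dense (B.domain : Set H)) (hR : IsResolventAt B lam R)
    (hS : IsResolventAt B.adjoint (conj lam) S) (z w : H) : ⟪S z, w⟫ = ⟪z, R w⟫ := by
  rw [← inner_conj_symm, ← inner_res_res hBd hR hS, inner_conj_symm]

/-- A symmetric operator satisfies `⟪A x, y⟫ = ⟪x, A y⟫`. -/
theorem symm_inner {A : H →ₗ.[ℂ] H} (hAd : Dense (A.domain : Set H)) (hAsym : A ≤ A.adjoint)
    (x y : A.domain) : ⟪A x, (y : H)⟫ = ⟪(x : H), A y⟫ := by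
  have h := adjoint_isFormalAdjoint hAd ⟨(x : H), hAsym.1 x.2⟩ y
  have h2 : A x = A.adjoint ⟨(x : H), hAsym.1 x.2⟩ := hAsym.2 rfl
  rw [← h2] at h
  exact h

theorem mem_adjoint_of_forall {E F : Type*} [NormedAddCommGroup E] [InnerProductSpace ℂ E]
    [NormedAddCommGroup F] [InnerProductSpace ℂ F] [CompleteSpace E]
    {T : E →ₗ.[ℂ] F} (hT : Dense (T.domain : Set E)) {u : F} {f : E}
    (h : ∀ x : T.domain, ⟪f, (x : E)⟫ = ⟪u, T x⟫) :
    ∃ hu : u ∈ T.adjoint.domain, T.adjoint ⟨u, hu⟩ = f :=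
  have hu : u ∈ T.adjoint.domain := mem_adjoint_domain_of_exists u ⟨f, h⟩
  ⟨hu, adjoint_apply_eq hT ⟨u, hu⟩ h⟩

/-- The membership criterion for `D(B)` via the adjoint, using the resolvent. -/
theorem mem_of_forall_adjoint (hBd : Dense (B.domain : Set H)) (hR : IsResolventAt B lam R)
    (hS : IsResolventAt B.adjoint (conj lam) S) {w k : H}
    (h : ∀ x : B.adjoint.domain, ⟪B.adjoint x, w⟫ = ⟪(x : H), k⟫) :
    ∃ hw : w ∈ B.domain, B ⟨w, hw⟩ = k := by
  have hw' : R (k - lam • w) ∈ B.domain := hR.mem _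
  have hBw' : B ⟨R (k - lam • w), hw'⟩ = k - lam • w + lam • R (k - lam • w) :=
    sub_eq_iff_eq_add.mp (hR.right_inv _)
  have hww' : w = R (k - lam • w) := by
    apply ext_inner_left ℂ
    intro z
    rw [← hS.right_inv z]
    rw [inner_sub_left, inner_sub_left, inner_smul_left, inner_smul_left]
    rw [h ⟨S z, hS.mem z⟩]
    have hfa : ⟪B.adjoint ⟨S z, hS.mem z⟩, ((⟨R (k - lam • w), hw'⟩ : B.domain) : H)⟫
        = ⟪S z, B ⟨R (k - lam • w), hw'⟩⟫ :=
      adjoint_isFormalAdjoint hBd ⟨S z, hS.mem z⟩ ⟨R (k - lam • w), hw'⟩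
    rw [hfa, hBw', inner_add_right, inner_sub_right, inner_smul_right, inner_smul_right,
      Complex.conj_conj]
    ring
  have hwmem : w ∈ B.domain := hww' ▸ hw'
  refine ⟨hwmem, ?_⟩
  have he : (⟨w, hwmem⟩ : B.domain) = ⟨R (k - lam • w), hw'⟩ := Subtype.ext hww'
  rw [he, hBw', ← hww']
  abel


/-- Composition of a closable operator with a continuous map whose range lies in its domain
is continuous (closed graph theorem). -/
theorem continuous_pcomp_clm {A : H →ₗ.[ℂ] H} (hAc : A.IsClosable) (S : H →L[ℂ] H)
    (hSA : ∀ z, S z ∈ A.domain) :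
    Continuous (A.toFun ∘ₗ LinearMap.codRestrict A.domain (S : H →ₗ[ℂ] H) hSA) := by
  set Flin : H →ₗ[ℂ] H := A.toFun ∘ₗ LinearMap.codRestrict A.domain (S : H →ₗ[ℂ] H) hSA
    with hFlin
  have hFapp : ∀ z : H, Flin z = A ⟨S z, hSA z⟩ := fun z => rfl
  obtain ⟨A', hA'⟩ := hAc
  have hle : A ≤ A' := by
    apply LinearPMap.le_of_le_graph
    rw [← hA']
    exact Submodule.le_topologicalClosure _
  apply LinearMap.continuous_of_isClosed_graph
  apply IsSeqClosed.isClosed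
  intro f p hmem hconv
  rw [SetLike.mem_coe, LinearMap.mem_graph_iff]
  have hmem' : ∀ n, (f n).2 = Flin (f n).1 := fun n => (LinearMap.mem_graph_iff _ _).mp (hmem n)
  have h1 : Filter.Tendsto (fun n => (f n).1) Filter.atTop (nhds p.1) :=
    (continuous_fst.tendsto p).comp hconv
  have h2 : Filter.Tendsto (fun n => (f n).2) Filter.atTop (nhds p.2) :=
    (continuous_snd.tendsto p).comp hconv
  have hq : (S p.1, p.2) ∈ A'.graph := by
    rw [← hA']
    have : ((S p.1, p.2) : H × H) ∈ closure (A.graph : Set (H × H)) := by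
      refine mem_closure_of_tendsto
        (Filter.Tendsto.prodMk_nhds ((S.continuous.tendsto p.1).comp h1)
          (by simpa only [hmem'] using h2)) ?_
      filter_upwards with n
      exact A.mem_graph ⟨S (f n).1, hSA _⟩
    rw [← SetLike.mem_coe, Submodule.topologicalClosure_coe]
    exact this
  rw [LinearPMap.mem_graph_iff] at hq
  obtain ⟨y, hy1, hy2⟩ := hq
  have : A' ⟨S p.1, hle.1 (hSA p.1)⟩ = p.2 := by
    rw [show (⟨S p.1, hle.1 (hSA p.1)⟩ : A'.domain) = y from Subtype.ext hy1.symm, hy2]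
  rw [hFapp, hle.2 (x := ⟨S p.1, hSA p.1⟩) (y := ⟨S p.1, hle.1 (hSA p.1)⟩) rfl, this]

/-- The bounded operator `z ↦ A (S z)`. -/
noncomputable def clmComp (A : H →ₗ.[ℂ] H) (hAc : A.IsClosable) (S : H →L[ℂ] H)
    (hSA : ∀ z, S z ∈ A.domain) : H →L[ℂ] H :=
  ⟨A.toFun ∘ₗ LinearMap.codRestrict A.domain (S : H →ₗ[ℂ] H) hSA,
    continuous_pcomp_clm hAc S hSA⟩

theorem clmComp_apply {A : H →ₗ.[ℂ] H} (hAc : A.IsClosable) (S : H →L[ℂ] H)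
    (hSA : ∀ z, S z ∈ A.domain) (z : H) : clmComp A hAc S hSA z = A ⟨S z, hSA z⟩ := rfl
/-- The adjoint of the resolvent is a resolvent of the adjoint. -/
theorem IsResolventAt.adjointRes (hBd : Dense (B.domain : Set H))
    (hR : IsResolventAt B lam R) :
    IsResolventAt B.adjoint (conj lam) (ContinuousLinearMap.adjoint R) := by
  have hRB : ∀ x : B.domain, R (B x) = (x : H) + lam • R (x : H) := by
    intro x
    have h := hR.left_inv x
    rw [_root_.map_sub, _root_.map_smul] at h
    exact sub_eq_iff_eq_add.mp h
  have key : ∀ y : H, ∃ hu : R.adjoint y ∈ B.adjoint.domain,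
      B.adjoint ⟨R.adjoint y, hu⟩ = y + conj lam • R.adjoint y := by
    intro y
    apply mem_adjoint_of_forall hBd
    intro x
    rw [inner_add_left, inner_smul_left, Complex.conj_conj,
      ContinuousLinearMap.adjoint_inner_left, ContinuousLinearMap.adjoint_inner_left, hRB,
      inner_add_right, inner_smul_right]
  refine ⟨fun y => (key y).1, fun y => by rw [(key y).2]; abel, ?_⟩
  intro x
  apply ext_inner_left ℂ
  intro v
  rw [ContinuousLinearMap.adjoint_inner_right, inner_sub_right, inner_smul_right]
  have h1 : ⟪R v, B.adjoint x⟫ = ⟪v, (x : H)⟫ + conj lam * ⟪R v, (x : H)⟫ := by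
    rw [← inner_conj_symm, adjoint_isFormalAdjoint hBd x ⟨R v, hR.mem v⟩, inner_conj_symm,
      hR.map_res, inner_add_left, inner_smul_left]
  rw [h1]
  ring

section Block

variable (A' B' C' D' : H →ₗ.[ℂ] H)

theorem mem_blockOpL_iff {p : WithLp 2 (H × H)} :
    p ∈ (blockOpL A' B' C' D').domain ↔
      (p.fst ∈ A'.domain ∧ p.fst ∈ C'.domain) ∧ (p.snd ∈ B'.domain ∧ p.snd ∈ D'.domain) :=
  Iff.rfl

theorem blockOpL_apply_s16 {p : WithLp 2 (H × H)} (hp : p ∈ (blockOpL A' B' C' D').domain) :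
    blockOpL A' B' C' D' ⟨p, hp⟩ =
      (WithLp.equiv 2 (H × H)).symm
        (A' ⟨p.fst, hp.1.1⟩ + B' ⟨p.snd, hp.2.1⟩, C' ⟨p.fst, hp.1.2⟩ + D' ⟨p.snd, hp.2.2⟩) := rfl

theorem withlp_fst (a b : H) : ((WithLp.equiv 2 (H × H)).symm (a, b)).fst = a := rfl
theorem withlp_snd (a b : H) : ((WithLp.equiv 2 (H × H)).symm (a, b)).snd = b := rfl

end Block
theorem mem_pcomp_iff {A g : H →ₗ.[ℂ] H} {x : H} :
    x ∈ (pcomp A g).domain ↔ ∃ hx : x ∈ g.domain, g ⟨x, hx⟩ ∈ A.domain := Iff.rfl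

theorem pcomp_apply {A g : H →ₗ.[ℂ] H} {x : H} (hx : x ∈ (pcomp A g).domain)
    (hx' : x ∈ g.domain) (h2 : g ⟨x, hx'⟩ ∈ A.domain) :
    pcomp A g ⟨x, hx⟩ = A ⟨g ⟨x, hx'⟩, h2⟩ := rfl

section Main

variable {A B D : H →ₗ.[ℂ] H} {lam : ℂ} {R S : H →L[ℂ] H}

/-- Membership in the domain of `T₁ = B - A S D`. -/
theorem mem_T1_iff (hBA : B.adjoint.domain ≤ A.domain) (hBD : B.domain ≤ D.domain)
    (hS : IsResolventAt B.adjoint (conj lam) S) {y : H} :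
    y ∈ (B - pcomp A ((S : H →ₗ[ℂ] H).compPMap D)).domain ↔ y ∈ B.domain := by
  constructor
  · exact fun h => h.1
  · intro hy
    refine ⟨hy, ?_⟩
    exact ⟨hBD hy, hBA (hS.mem _)⟩

theorem T1_apply (hBA : B.adjoint.domain ≤ A.domain) (hBD : B.domain ≤ D.domain)
    (hS : IsResolventAt B.adjoint (conj lam) S) {y : H}
    (hy : y ∈ (B - pcomp A ((S : H →ₗ[ℂ] H).compPMap D)).domain) :
    (B - pcomp A ((S : H →ₗ[ℂ] H).compPMap D)) ⟨y, hy⟩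
      = B ⟨y, hy.1⟩ - A ⟨S (D ⟨y, hBD hy.1⟩), hBA (hS.mem _)⟩ := by
  rw [LinearPMap.sub_apply]
  congr 1

theorem mem_T2_iff (hBA : B.adjoint.domain ≤ A.domain) (hBD : B.domain ≤ D.domain)
    (hR : IsResolventAt B lam R) {u : H} :
    u ∈ (B.adjoint - pcomp D ((R : H →ₗ[ℂ] H).compPMap A)).domain ↔ u ∈ B.adjoint.domain := by
  constructor
  · exact fun h => h.1
  · intro hu
    exact ⟨hu, ⟨hBA hu, hBD (hR.mem _)⟩⟩

theorem T2_apply (hBA : B.adjoint.domain ≤ A.domain) (hBD : B.domain ≤ D.domain)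
    (hR : IsResolventAt B lam R) {u : H}
    (hu : u ∈ (B.adjoint - pcomp D ((R : H →ₗ[ℂ] H).compPMap A)).domain) :
    (B.adjoint - pcomp D ((R : H →ₗ[ℂ] H).compPMap A)) ⟨u, hu⟩
      = B.adjoint ⟨u, hu.1⟩ - D ⟨R (A ⟨u, hBA hu.1⟩), hBD (hR.mem _)⟩ := by
  rw [LinearPMap.sub_apply]
  congr 1

theorem T1_dense (hBd : Dense (B.domain : Set H)) (hBA : B.adjoint.domain ≤ A.domain)
    (hBD : B.domain ≤ D.domain) (hS : IsResolventAt B.adjoint (conj lam) S) :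
    Dense (((B - pcomp A ((S : H →ₗ[ℂ] H).compPMap D)).domain : Submodule ℂ H) : Set H) := by
  have : (((B - pcomp A ((S : H →ₗ[ℂ] H).compPMap D)).domain : Submodule ℂ H) : Set H)
      = (B.domain : Set H) := Set.ext fun y => mem_T1_iff hBA hBD hS
  rw [this]; exact hBd

theorem T2_dense (hBad : Dense (B.adjoint.domain : Set H)) (hBA : B.adjoint.domain ≤ A.domain)
    (hBD : B.domain ≤ D.domain) (hR : IsResolventAt B lam R) :
    Dense (((B.adjoint - pcomp D ((R : H →ₗ[ℂ] H).compPMap A)).domain : Submodule ℂ H) : Set H) := by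
  have : (((B.adjoint - pcomp D ((R : H →ₗ[ℂ] H).compPMap A)).domain : Submodule ℂ H) : Set H)
      = (B.adjoint.domain : Set H) := Set.ext fun y => mem_T2_iff hBA hBD hR
  rw [this]; exact hBad

/-- Build elements of the domain of the block operator. -/
theorem mem_blockL (hBA : B.adjoint.domain ≤ A.domain) (hBD : B.domain ≤ D.domain)
    {x y : H} (hx : x ∈ B.adjoint.domain) (hy : y ∈ B.domain) :
    (WithLp.equiv 2 (H × H)).symm (x, y) ∈ (blockOpL A B B.adjoint D).domain :=
  ⟨⟨hBA hx, hx⟩, ⟨hy, hBD hy⟩⟩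

theorem blockL_inner (hBA : B.adjoint.domain ≤ A.domain) (hBD : B.domain ≤ D.domain)
    {x y : H} (hx : x ∈ B.adjoint.domain) (hy : y ∈ B.domain) (q : WithLp 2 (H × H)) :
    ⟪q, blockOpL A B B.adjoint D ⟨(WithLp.equiv 2 (H × H)).symm (x, y), mem_blockL hBA hBD hx hy⟩⟫
      = ⟪q.fst, A ⟨x, hBA hx⟩ + B ⟨y, hy⟩⟫ + ⟪q.snd, B.adjoint ⟨x, hx⟩ + D ⟨y, hBD hy⟩⟫ := rfl


theorem blockL_inner_right (r : WithLp 2 (H × H)) (q : (blockOpL A B B.adjoint D).domain) :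
    ⟪r, blockOpL A B B.adjoint D q⟫
      = ⟪r.fst, A ⟨(q : WithLp 2 (H × H)).fst, q.2.1.1⟩ + B ⟨(q : WithLp 2 (H × H)).snd, q.2.2.1⟩⟫
        + ⟪r.snd, B.adjoint ⟨(q : WithLp 2 (H × H)).fst, q.2.1.2⟩
            + D ⟨(q : WithLp 2 (H × H)).snd, q.2.2.2⟩⟫ := rfl

theorem blockL_inner_left (q : (blockOpL A B B.adjoint D).domain) (r : WithLp 2 (H × H)) :
    ⟪blockOpL A B B.adjoint D q, r⟫
      = ⟪A ⟨(q : WithLp 2 (H × H)).fst, q.2.1.1⟩ + B ⟨(q : WithLp 2 (H × H)).snd, q.2.2.1⟩, r.fst⟫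
        + ⟪B.adjoint ⟨(q : WithLp 2 (H × H)).fst, q.2.1.2⟩
            + D ⟨(q : WithLp 2 (H × H)).snd, q.2.2.2⟩, r.snd⟫ := rfl

/-- The block operator matrix `[[A, B], [B*, D]]` is symmetric. -/
theorem blockSymm (hAd : Dense (A.domain : Set H)) (hBd : Dense (B.domain : Set H))
    (hBad : Dense (B.adjoint.domain : Set H)) (hDd : Dense (D.domain : Set H))
    (hAsym : A ≤ A.adjoint) (hBsym : B ≤ B.adjoint.adjoint) (hDsym : D ≤ D.adjoint) :
    (blockOpL A B B.adjoint D).IsFormalAdjoint (blockOpL A B B.adjoint D) := by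
  intro w q
  rw [blockL_inner_left, blockL_inner_right]
  rw [inner_add_left, inner_add_left, inner_add_right, inner_add_right]
  have h1 : ⟪A ⟨(w : WithLp 2 (H × H)).fst, w.2.1.1⟩, (q : WithLp 2 (H × H)).fst⟫
      = ⟪(w : WithLp 2 (H × H)).fst, A ⟨(q : WithLp 2 (H × H)).fst, q.2.1.1⟩⟫ :=
    symm_inner hAd hAsym ⟨(w : WithLp 2 (H × H)).fst, w.2.1.1⟩
      ⟨(q : WithLp 2 (H × H)).fst, q.2.1.1⟩
  have h4 : ⟪D ⟨(w : WithLp 2 (H × H)).snd, w.2.2.2⟩, (q : WithLp 2 (H × H)).snd⟫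
      = ⟪(w : WithLp 2 (H × H)).snd, D ⟨(q : WithLp 2 (H × H)).snd, q.2.2.2⟩⟫ :=
    symm_inner hDd hDsym ⟨(w : WithLp 2 (H × H)).snd, w.2.2.2⟩
      ⟨(q : WithLp 2 (H × H)).snd, q.2.2.2⟩
  have h2 : ⟪B ⟨(w : WithLp 2 (H × H)).snd, w.2.2.1⟩, (q : WithLp 2 (H × H)).fst⟫
      = ⟪(w : WithLp 2 (H × H)).snd, B.adjoint ⟨(q : WithLp 2 (H × H)).fst, q.2.1.2⟩⟫ := by
    have h := adjoint_isFormalAdjoint hBd ⟨(q : WithLp 2 (H × H)).fst, q.2.1.2⟩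
      ⟨(w : WithLp 2 (H × H)).snd, w.2.2.1⟩
    have h' := congrArg (starRingEnd ℂ) h
    rw [inner_conj_symm, inner_conj_symm] at h'
    exact h'.symm
  have h3 : ⟪B.adjoint ⟨(w : WithLp 2 (H × H)).fst, w.2.1.2⟩, (q : WithLp 2 (H × H)).snd⟫
      = ⟪(w : WithLp 2 (H × H)).fst, B ⟨(q : WithLp 2 (H × H)).snd, q.2.2.1⟩⟫ := by
    have h := adjoint_isFormalAdjoint hBad
      (⟨(q : WithLp 2 (H × H)).snd, hBsym.1 q.2.2.1⟩ : B.adjoint.adjoint.domain)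
      ⟨(w : WithLp 2 (H × H)).fst, w.2.1.2⟩
    rw [← hBsym.2 (show ((⟨(q : WithLp 2 (H × H)).snd, q.2.2.1⟩ : B.domain) : H)
      = ((⟨(q : WithLp 2 (H × H)).snd, hBsym.1 q.2.2.1⟩ : B.adjoint.adjoint.domain) : H) from rfl)]
      at h
    have h' := congrArg (starRingEnd ℂ) h
    rw [inner_conj_symm, inner_conj_symm] at h'
    exact h'.symm
  rw [h1, h2, h3, h4]
  ring

/-- Identity (i) for elements of the adjoint domain. -/
theorem adj_spec_fst (hBA : B.adjoint.domain ≤ A.domain) (hBD : B.domain ≤ D.domain)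
    (hdense : Dense ((blockOpL A B B.adjoint D).domain : Set (WithLp 2 (H × H))))
    (w : (blockOpL A B B.adjoint D).adjoint.domain) {x : H} (hx : x ∈ B.adjoint.domain) :
    ⟪((blockOpL A B B.adjoint D).adjoint w).fst, x⟫
      = ⟪(w : WithLp 2 (H × H)).fst, A ⟨x, hBA hx⟩⟫
        + ⟪(w : WithLp 2 (H × H)).snd, B.adjoint ⟨x, hx⟩⟫ := by
  have h := adjoint_isFormalAdjoint hdense w
    ⟨(WithLp.equiv 2 (H × H)).symm (x, 0), mem_blockL hBA hBD hx B.domain.zero_mem⟩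
  have hz1 : B ⟨(0 : H), B.domain.zero_mem⟩ = 0 := B.map_zero
  have hz2 : D ⟨(0 : H), hBD B.domain.zero_mem⟩ = 0 := D.map_zero
  have h' : ⟪((blockOpL A B B.adjoint D).adjoint w).fst, x⟫
        + ⟪((blockOpL A B B.adjoint D).adjoint w).snd, (0 : H)⟫
      = ⟪(w : WithLp 2 (H × H)).fst, A ⟨x, hBA hx⟩ + B ⟨(0 : H), B.domain.zero_mem⟩⟫
        + ⟪(w : WithLp 2 (H × H)).snd,
            B.adjoint ⟨x, hx⟩ + D ⟨(0 : H), hBD B.domain.zero_mem⟩⟫ := h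
  rwa [hz1, hz2, add_zero, add_zero, inner_zero_right, add_zero] at h' 

/-- Identity (ii) for elements of the adjoint domain. -/
theorem adj_spec_snd (hBA : B.adjoint.domain ≤ A.domain) (hBD : B.domain ≤ D.domain)
    (hdense : Dense ((blockOpL A B B.adjoint D).domain : Set (WithLp 2 (H × H))))
    (w : (blockOpL A B B.adjoint D).adjoint.domain) {y : H} (hy : y ∈ B.domain) :
    ⟪((blockOpL A B B.adjoint D).adjoint w).snd, y⟫
      = ⟪(w : WithLp 2 (H × H)).fst, B ⟨y, hy⟩⟫
        + ⟪(w : WithLp 2 (H × H)).snd, D ⟨y, hBD hy⟩⟫ := by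
  have h := adjoint_isFormalAdjoint hdense w
    ⟨(WithLp.equiv 2 (H × H)).symm (0, y), mem_blockL hBA hBD B.adjoint.domain.zero_mem hy⟩
  have hz1 : A ⟨(0 : H), hBA B.adjoint.domain.zero_mem⟩ = 0 := A.map_zero
  have hz2 : B.adjoint ⟨(0 : H), B.adjoint.domain.zero_mem⟩ = 0 := B.adjoint.map_zero
  have h' : ⟪((blockOpL A B B.adjoint D).adjoint w).fst, (0 : H)⟫
        + ⟪((blockOpL A B B.adjoint D).adjoint w).snd, y⟫
      = ⟪(w : WithLp 2 (H × H)).fst, A ⟨(0 : H), hBA B.adjoint.domain.zero_mem⟩ + B ⟨y, hy⟩⟫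
        + ⟪(w : WithLp 2 (H × H)).snd,
            B.adjoint ⟨(0 : H), B.adjoint.domain.zero_mem⟩ + D ⟨y, hBD hy⟩⟫ := h
  rwa [hz1, hz2, zero_add, zero_add, inner_zero_right, zero_add] at h' 
theorem inner_S_right (hBd : Dense (B.domain : Set H)) (hR : IsResolventAt B lam R)
    (hS : IsResolventAt B.adjoint (conj lam) S) (a z : H) : ⟪a, S z⟫ = ⟪R a, z⟫ := by
  rw [← inner_conj_symm, inner_res_res' hBd hR hS, inner_conj_symm]

theorem inner_R_right (hBd : Dense (B.domain : Set H)) (hR : IsResolventAt B lam R)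
    (hS : IsResolventAt B.adjoint (conj lam) S) (a w' : H) : ⟪a, R w'⟫ = ⟪S a, w'⟫ := by
  rw [← inner_conj_symm, inner_res_res hBd hR hS, inner_conj_symm]

/-- Key identity (F): for `w` in the adjoint domain of the block operator,
`⟪u, A (S z)⟫ = ⟪R (f - λ v) - v, z⟫`. -/
theorem keyF (hBd : Dense (B.domain : Set H)) (hBA : B.adjoint.domain ≤ A.domain)
    (hBD : B.domain ≤ D.domain)
    (hdense : Dense ((blockOpL A B B.adjoint D).domain : Set (WithLp 2 (H × H))))
    (hR : IsResolventAt B lam R) (hS : IsResolventAt B.adjoint (conj lam) S)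
    (w : (blockOpL A B B.adjoint D).adjoint.domain) (z : H) :
    ⟪(w : WithLp 2 (H × H)).fst, A ⟨S z, hBA (hS.mem z)⟩⟫
      = ⟪R (((blockOpL A B B.adjoint D).adjoint w).fst - lam • (w : WithLp 2 (H × H)).snd)
          - (w : WithLp 2 (H × H)).snd, z⟫ := by
  have h := adj_spec_fst hBA hBD hdense w (hS.mem z)
  rw [hS.map_res z, inner_add_right, inner_smul_right] at h
  have h2 : ⟪(w : WithLp 2 (H × H)).fst, A ⟨S z, hBA (hS.mem z)⟩⟫
      = ⟪((blockOpL A B B.adjoint D).adjoint w).fst, S z⟫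
        - ⟪(w : WithLp 2 (H × H)).snd, z⟫
        - conj lam * ⟪(w : WithLp 2 (H × H)).snd, S z⟫ := by
    rw [h]; ring
  rw [h2, inner_S_right hBd hR hS, inner_S_right hBd hR hS, _root_.map_sub, _root_.map_smul,
    inner_sub_left, inner_sub_left, inner_smul_left]
  ring

/-- Key identity (G): `⟪v, D (R w')⟫ = ⟪S (g - conj λ u) - u, w'⟫`. -/
theorem keyG (hBd : Dense (B.domain : Set H)) (hBA : B.adjoint.domain ≤ A.domain)
    (hBD : B.domain ≤ D.domain)
    (hdense : Dense ((blockOpL A B B.adjoint D).domain : Set (WithLp 2 (H × H))))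
    (hR : IsResolventAt B lam R) (hS : IsResolventAt B.adjoint (conj lam) S)
    (w : (blockOpL A B B.adjoint D).adjoint.domain) (w' : H) :
    ⟪(w : WithLp 2 (H × H)).snd, D ⟨R w', hBD (hR.mem w')⟩⟫
      = ⟪S (((blockOpL A B B.adjoint D).adjoint w).snd
            - conj lam • (w : WithLp 2 (H × H)).fst)
          - (w : WithLp 2 (H × H)).fst, w'⟫ := by
  have h := adj_spec_snd hBA hBD hdense w (hR.mem w')
  rw [hR.map_res w', inner_add_right, inner_smul_right] at h
  have h2 : ⟪(w : WithLp 2 (H × H)).snd, D ⟨R w', hBD (hR.mem w')⟩⟫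
      = ⟪((blockOpL A B B.adjoint D).adjoint w).snd, R w'⟫
        - ⟪(w : WithLp 2 (H × H)).fst, w'⟫
        - lam * ⟪(w : WithLp 2 (H × H)).fst, R w'⟫ := by
    rw [h]; ring
  rw [h2, inner_R_right hBd hR hS, inner_R_right hBd hR hS, _root_.map_sub, _root_.map_smul,
    inner_sub_left, inner_sub_left, inner_smul_left, Complex.conj_conj]
  ring

theorem le_of_forall_exists {T U : H →ₗ.[ℂ] H}
    (h : ∀ (u : H) (hu : u ∈ T.domain), ∃ hu2 : u ∈ U.domain, U ⟨u, hu2⟩ = T ⟨u, hu⟩) :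
    T ≤ U := by
  refine ⟨fun u hu => (h u hu).1, ?_⟩
  intro x y hxy
  obtain ⟨h2, he⟩ := h x x.2
  rw [show T x = T ⟨(x : H), x.2⟩ from rfl, ← he]
  congr 1
  exact Subtype.ext hxy

/-- The central computation: `⟪T₂ u, y⟫ = ⟪u, T₁ y⟫`. -/
theorem central (hAd : Dense (A.domain : Set H)) (hBd : Dense (B.domain : Set H))
    (hDd : Dense (D.domain : Set H))
    (hAsym : A ≤ A.adjoint) (hDsym : D ≤ D.adjoint)
    (hBA : B.adjoint.domain ≤ A.domain) (hBD : B.domain ≤ D.domain)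
    (hR : IsResolventAt B lam R) (hS : IsResolventAt B.adjoint (conj lam) S)
    {u : H} (hu : u ∈ (B.adjoint - pcomp D ((R : H →ₗ[ℂ] H).compPMap A)).domain)
    (y : (B - pcomp A ((S : H →ₗ[ℂ] H).compPMap D)).domain) :
    ⟪(B.adjoint - pcomp D ((R : H →ₗ[ℂ] H).compPMap A)) ⟨u, hu⟩, (y : H)⟫
      = ⟪u, (B - pcomp A ((S : H →ₗ[ℂ] H).compPMap D)) y⟫ := by
  have hy : (y : H) ∈ (B - pcomp A ((S : H →ₗ[ℂ] H).compPMap D)).domain := y.2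
  rw [show (B - pcomp A ((S : H →ₗ[ℂ] H).compPMap D)) y
    = (B - pcomp A ((S : H →ₗ[ℂ] H).compPMap D)) ⟨(y : H), hy⟩ from rfl]
  rw [T2_apply hBA hBD hR hu, T1_apply hBA hBD hS hy]
  rw [inner_sub_left, inner_sub_right]
  have e1 : ⟪B.adjoint ⟨u, hu.1⟩, (y : H)⟫ = ⟪u, B ⟨(y : H), hy.1⟩⟫ :=
    adjoint_isFormalAdjoint hBd ⟨u, hu.1⟩ ⟨(y : H), hy.1⟩
  have e2 : ⟪D ⟨R (A ⟨u, hBA hu.1⟩), hBD (hR.mem _)⟩, (y : H)⟫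
      = ⟪u, A ⟨S (D ⟨(y : H), hBD hy.1⟩), hBA (hS.mem _)⟩⟫ := by
    have s1 : ⟪D ⟨R (A ⟨u, hBA hu.1⟩), hBD (hR.mem _)⟩, (y : H)⟫
        = ⟪R (A ⟨u, hBA hu.1⟩), D ⟨(y : H), hBD hy.1⟩⟫ :=
      symm_inner hDd hDsym ⟨R (A ⟨u, hBA hu.1⟩), hBD (hR.mem _)⟩ ⟨(y : H), hBD hy.1⟩
    have s2 : ⟪R (A ⟨u, hBA hu.1⟩), D ⟨(y : H), hBD hy.1⟩⟫
        = ⟪A ⟨u, hBA hu.1⟩, S (D ⟨(y : H), hBD hy.1⟩)⟫ :=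
      inner_res_res hBd hR hS _ _
    have s3 : ⟪A ⟨u, hBA hu.1⟩, S (D ⟨(y : H), hBD hy.1⟩)⟫
        = ⟪u, A ⟨S (D ⟨(y : H), hBD hy.1⟩), hBA (hS.mem _)⟩⟫ :=
      symm_inner hAd hAsym ⟨u, hBA hu.1⟩ ⟨S (D ⟨(y : H), hBD hy.1⟩), hBA (hS.mem _)⟩
    rw [s1, s2, s3]
  rw [e1, e2]

/-- The central computation, other side: `⟪T₁ v, x⟫ = ⟪v, T₂ x⟫`. -/
theorem central' (hAd : Dense (A.domain : Set H)) (hBd : Dense (B.domain : Set H))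
    (hDd : Dense (D.domain : Set H))
    (hAsym : A ≤ A.adjoint) (hDsym : D ≤ D.adjoint)
    (hBA : B.adjoint.domain ≤ A.domain) (hBD : B.domain ≤ D.domain)
    (hR : IsResolventAt B lam R) (hS : IsResolventAt B.adjoint (conj lam) S)
    {v : H} (hv : v ∈ (B - pcomp A ((S : H →ₗ[ℂ] H).compPMap D)).domain)
    (x : (B.adjoint - pcomp D ((R : H →ₗ[ℂ] H).compPMap A)).domain) :
    ⟪(B - pcomp A ((S : H →ₗ[ℂ] H).compPMap D)) ⟨v, hv⟩, (x : H)⟫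
      = ⟪v, (B.adjoint - pcomp D ((R : H →ₗ[ℂ] H).compPMap A)) x⟫ := by
  have hx : (x : H) ∈ (B.adjoint - pcomp D ((R : H →ₗ[ℂ] H).compPMap A)).domain := x.2
  rw [show (B.adjoint - pcomp D ((R : H →ₗ[ℂ] H).compPMap A)) x
    = (B.adjoint - pcomp D ((R : H →ₗ[ℂ] H).compPMap A)) ⟨(x : H), hx⟩ from rfl]
  rw [T1_apply hBA hBD hS hv, T2_apply hBA hBD hR hx]
  rw [inner_sub_left, inner_sub_right]
  have e1 : ⟪B ⟨v, hv.1⟩, (x : H)⟫ = ⟪v, B.adjoint ⟨(x : H), hx.1⟩⟫ := by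
    have h := adjoint_isFormalAdjoint hBd ⟨(x : H), hx.1⟩ ⟨v, hv.1⟩
    have h' := congrArg (starRingEnd ℂ) h
    rw [inner_conj_symm, inner_conj_symm] at h'
    exact h'.symm
  have e2 : ⟪A ⟨S (D ⟨v, hBD hv.1⟩), hBA (hS.mem _)⟩, (x : H)⟫
      = ⟪v, D ⟨R (A ⟨(x : H), hBA hx.1⟩), hBD (hR.mem _)⟩⟫ := by
    have s1 : ⟪A ⟨S (D ⟨v, hBD hv.1⟩), hBA (hS.mem _)⟩, (x : H)⟫
        = ⟪S (D ⟨v, hBD hv.1⟩), A ⟨(x : H), hBA hx.1⟩⟫ :=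
      symm_inner hAd hAsym ⟨S (D ⟨v, hBD hv.1⟩), hBA (hS.mem _)⟩ ⟨(x : H), hBA hx.1⟩
    have s2 : ⟪S (D ⟨v, hBD hv.1⟩), A ⟨(x : H), hBA hx.1⟩⟫
        = ⟪D ⟨v, hBD hv.1⟩, R (A ⟨(x : H), hBA hx.1⟩)⟫ :=
      inner_res_res' hBd hR hS _ _
    have s3 : ⟪D ⟨v, hBD hv.1⟩, R (A ⟨(x : H), hBA hx.1⟩)⟫
        = ⟪v, D ⟨R (A ⟨(x : H), hBA hx.1⟩), hBD (hR.mem _)⟩⟫ :=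
      symm_inner hDd hDsym ⟨v, hBD hv.1⟩ ⟨R (A ⟨(x : H), hBA hx.1⟩), hBD (hR.mem _)⟩
    rw [s1, s2, s3]
  rw [e1, e2]

/-- `T₂ ≤ T₁†` holds unconditionally. -/
theorem T2_le_adjT1 (hAd : Dense (A.domain : Set H)) (hBd : Dense (B.domain : Set H))
    (hDd : Dense (D.domain : Set H))
    (hAsym : A ≤ A.adjoint) (hDsym : D ≤ D.adjoint)
    (hBA : B.adjoint.domain ≤ A.domain) (hBD : B.domain ≤ D.domain)
    (hR : IsResolventAt B lam R) (hS : IsResolventAt B.adjoint (conj lam) S) :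
    (B.adjoint - pcomp D ((R : H →ₗ[ℂ] H).compPMap A))
      ≤ (B - pcomp A ((S : H →ₗ[ℂ] H).compPMap D)).adjoint := by
  apply le_of_forall_exists
  intro u hu
  exact mem_adjoint_of_forall (T1_dense hBd hBA hBD hS)
    (fun y => central hAd hBd hDd hAsym hDsym hBA hBD hR hS hu y)

/-- `T₁ ≤ T₂†` holds unconditionally. -/
theorem T1_le_adjT2 (hAd : Dense (A.domain : Set H)) (hBd : Dense (B.domain : Set H))
    (hBad : Dense (B.adjoint.domain : Set H)) (hDd : Dense (D.domain : Set H))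
    (hAsym : A ≤ A.adjoint) (hDsym : D ≤ D.adjoint)
    (hBA : B.adjoint.domain ≤ A.domain) (hBD : B.domain ≤ D.domain)
    (hR : IsResolventAt B lam R) (hS : IsResolventAt B.adjoint (conj lam) S) :
    (B - pcomp A ((S : H →ₗ[ℂ] H).compPMap D))
      ≤ (B.adjoint - pcomp D ((R : H →ₗ[ℂ] H).compPMap A)).adjoint := by
  apply le_of_forall_exists
  intro v hv
  exact mem_adjoint_of_forall (T2_dense hBad hBA hBD hR)
    (fun x => central' hAd hBd hDd hAsym hDsym hBA hBD hR hS hv x)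
theorem Fadj_eq (hAd : Dense (A.domain : Set H)) (hBd : Dense (B.domain : Set H))
    (hAsym : A ≤ A.adjoint) (hBA : B.adjoint.domain ≤ A.domain) (hAc : A.IsClosable)
    (hR : IsResolventAt B lam R) (hS : IsResolventAt B.adjoint (conj lam) S)
    {u : H} (hu : u ∈ B.adjoint.domain) :
    ContinuousLinearMap.adjoint (clmComp A hAc S (fun z => hBA (hS.mem z))) u
      = R (A ⟨u, hBA hu⟩) := by
  apply ext_inner_right ℂ
  intro z
  rw [ContinuousLinearMap.adjoint_inner_left, clmComp_apply]
  have s1 : ⟪A ⟨S z, hBA (hS.mem z)⟩, u⟫ = ⟪z, R (A ⟨u, hBA hu⟩)⟫ := by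
    rw [symm_inner hAd hAsym ⟨S z, hBA (hS.mem z)⟩ ⟨u, hBA hu⟩, inner_res_res' hBd hR hS]
  have s2 := congrArg (starRingEnd ℂ) s1
  rw [inner_conj_symm, inner_conj_symm] at s2
  exact s2

theorem Gadj_eq (hBd : Dense (B.domain : Set H)) (hDd : Dense (D.domain : Set H))
    (hDsym : D ≤ D.adjoint) (hBD : B.domain ≤ D.domain) (hDc : D.IsClosable)
    (hR : IsResolventAt B lam R) (hS : IsResolventAt B.adjoint (conj lam) S)
    {v : H} (hv : v ∈ B.domain) :
    ContinuousLinearMap.adjoint (clmComp D hDc R (fun z => hBD (hR.mem z))) v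
      = S (D ⟨v, hBD hv⟩) := by
  apply ext_inner_right ℂ
  intro z
  rw [ContinuousLinearMap.adjoint_inner_left, clmComp_apply]
  have s1 : ⟪D ⟨R z, hBD (hR.mem z)⟩, v⟫ = ⟪z, S (D ⟨v, hBD hv⟩)⟫ := by
    rw [symm_inner hDd hDsym ⟨R z, hBD (hR.mem z)⟩ ⟨v, hBD hv⟩, inner_res_res hBd hR hS]
  have s2 := congrArg (starRingEnd ℂ) s1
  rw [inner_conj_symm, inner_conj_symm] at s2
  exact s2

theorem A_eq_F (hBA : B.adjoint.domain ≤ A.domain) (hAc : A.IsClosable)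
    (hS : IsResolventAt B.adjoint (conj lam) S) {x : H} (hx : x ∈ B.adjoint.domain) :
    clmComp A hAc S (fun z => hBA (hS.mem z)) (B.adjoint ⟨x, hx⟩ - conj lam • x)
      = A ⟨x, hBA hx⟩ := by
  rw [clmComp_apply]
  congr 1
  exact Subtype.ext (hS.left_inv ⟨x, hx⟩)

/-- If the block operator is self-adjoint, then `T₁† ≤ T₂`. -/
theorem adjT1_le_T2 (hAd : Dense (A.domain : Set H)) (hBd : Dense (B.domain : Set H))
    (hDd : Dense (D.domain : Set H))
    (hdense : Dense ((blockOpL A B B.adjoint D).domain : Set (WithLp 2 (H × H))))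
    (hAsym : A ≤ A.adjoint) (hDsym : D ≤ D.adjoint)
    (hBA : B.adjoint.domain ≤ A.domain) (hBD : B.domain ≤ D.domain)
    (hAc : A.IsClosable)
    (hR : IsResolventAt B lam R) (hS : IsResolventAt B.adjoint (conj lam) S)
    (hsa : IsSelfAdjoint (blockOpL A B B.adjoint D)) :
    (B - pcomp A ((S : H →ₗ[ℂ] H).compPMap D)).adjoint
      ≤ (B.adjoint - pcomp D ((R : H →ₗ[ℂ] H).compPMap A)) := by
  have heq : (blockOpL A B B.adjoint D).adjoint = blockOpL A B B.adjoint D :=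
    LinearPMap.isSelfAdjoint_def.mp hsa
  apply le_of_forall_exists
  intro u hu
  set F := clmComp A hAc S (fun z => hBA (hS.mem z)) with hF
  set v := -(ContinuousLinearMap.adjoint F u) with hv
  set h := (B - pcomp A ((S : H →ₗ[ℂ] H).compPMap D)).adjoint ⟨u, hu⟩ with hh
  have key : ∀ q : (blockOpL A B B.adjoint D).domain,
      ⟪(WithLp.equiv 2 (H × H)).symm (lam • v, h), (q : WithLp 2 (H × H))⟫
        = ⟪(WithLp.equiv 2 (H × H)).symm (u, v), blockOpL A B B.adjoint D q⟫ := by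
    intro q
    rw [blockL_inner_right, withlp_fst, withlp_snd, inner_add_right, inner_add_right]
    have hxpart : ⟪u, A ⟨(q : WithLp 2 (H × H)).fst, q.2.1.1⟩⟫
        + ⟪v, B.adjoint ⟨(q : WithLp 2 (H × H)).fst, q.2.1.2⟩⟫
        = ⟪lam • v, (q : WithLp 2 (H × H)).fst⟫ := by
      rw [show A ⟨(q : WithLp 2 (H × H)).fst, q.2.1.1⟩
        = F (B.adjoint ⟨(q : WithLp 2 (H × H)).fst, q.2.1.2⟩
            - conj lam • (q : WithLp 2 (H × H)).fst) from (A_eq_F hBA hAc hS _).symm]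
      rw [_root_.map_sub, _root_.map_smul, inner_sub_right, inner_smul_right]
      rw [← ContinuousLinearMap.adjoint_inner_left F, ← ContinuousLinearMap.adjoint_inner_left F]
      rw [hv]
      simp only [inner_neg_left, inner_smul_left]
      ring
    have hypart : ⟪u, B ⟨(q : WithLp 2 (H × H)).snd, q.2.2.1⟩⟫
        + ⟪v, D ⟨(q : WithLp 2 (H × H)).snd, q.2.2.2⟩⟫
        = ⟪h, (q : WithLp 2 (H × H)).snd⟫ := by
      have hqs : (q : WithLp 2 (H × H)).snd
          ∈ (B - pcomp A ((S : H →ₗ[ℂ] H).compPMap D)).domain :=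
        (mem_T1_iff hBA hBD hS).mpr q.2.2.1
      have hD : ⟪v, D ⟨(q : WithLp 2 (H × H)).snd, q.2.2.2⟩⟫
          = -⟪u, A ⟨S (D ⟨(q : WithLp 2 (H × H)).snd, hBD q.2.2.1⟩),
              hBA (hS.mem _)⟩⟫ := by
        rw [hv, inner_neg_left, ContinuousLinearMap.adjoint_inner_left, clmComp_apply]
      have hfa := adjoint_isFormalAdjoint (T1_dense hBd hBA hBD hS) ⟨u, hu⟩
        ⟨(q : WithLp 2 (H × H)).snd, hqs⟩
      rw [T1_apply hBA hBD hS hqs, inner_sub_right] at hfa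
      have hfa2 : ⟪h, (q : WithLp 2 (H × H)).snd⟫
          = ⟪u, B ⟨(q : WithLp 2 (H × H)).snd, q.2.2.1⟩⟫
            - ⟪u, A ⟨S (D ⟨(q : WithLp 2 (H × H)).snd, hBD q.2.2.1⟩),
                hBA (hS.mem _)⟩⟫ := hfa
      rw [hD, hfa2]
      ring
    rw [show ⟪(WithLp.equiv 2 (H × H)).symm (lam • v, h), (q : WithLp 2 (H × H))⟫
      = ⟪lam • v, (q : WithLp 2 (H × H)).fst⟫ + ⟪h, (q : WithLp 2 (H × H)).snd⟫ from rfl]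
    rw [← hxpart, ← hypart]
    ring
  obtain ⟨hw, hval⟩ := mem_adjoint_of_forall hdense key
  have hdom : (WithLp.equiv 2 (H × H)).symm (u, v) ∈ (blockOpL A B B.adjoint D).domain := by
    rw [← congrArg LinearPMap.domain heq]
    exact hw
  have hu' : u ∈ B.adjoint.domain := hdom.1.2
  have hu2 : u ∈ (B.adjoint - pcomp D ((R : H →ₗ[ℂ] H).compPMap A)).domain :=
    (mem_T2_iff hBA hBD hR).mpr hu'
  refine ⟨hu2, ?_⟩
  have hext := LinearPMap.ext_iff.mp heq
  obtain ⟨hde, hfn⟩ := hext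
  have hvals : blockOpL A B B.adjoint D ⟨(WithLp.equiv 2 (H × H)).symm (u, v), hdom⟩
      = (WithLp.equiv 2 (H × H)).symm (lam • v, h) := by
    rw [← hfn (x := (WithLp.equiv 2 (H × H)).symm (u, v)) (hf := hw) (hg := hdom)]
    exact hval
  have hsnd : B.adjoint ⟨u, hdom.1.2⟩ + D ⟨v, hdom.2.2⟩ = h := by
    have := congrArg (fun t : WithLp 2 (H × H) => t.snd) hvals
    exact this
  have hvD : (⟨v, hdom.2.2⟩ : D.domain) = -(⟨R (A ⟨u, hBA hu'⟩), hBD (hR.mem _)⟩ : D.domain) := by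
    apply Subtype.ext
    show v = -(R (A ⟨u, hBA hu'⟩))
    rw [hv, Fadj_eq hAd hBd hAsym hBA hAc hR hS hu']
  rw [T2_apply hBA hBD hR hu2]
  rw [← hsnd, hvD, LinearPMap.map_neg]
  have : B.adjoint ⟨u, hu2.1⟩ = B.adjoint ⟨u, hdom.1.2⟩ := rfl
  rw [this]
  abel

/-- If the block operator is self-adjoint, then `T₂† ≤ T₁`. -/
theorem adjT2_le_T1 (hBd : Dense (B.domain : Set H))
    (hBad : Dense (B.adjoint.domain : Set H)) (hDd : Dense (D.domain : Set H))
    (hdense : Dense ((blockOpL A B B.adjoint D).domain : Set (WithLp 2 (H × H))))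
    (hDsym : D ≤ D.adjoint)
    (hBA : B.adjoint.domain ≤ A.domain) (hBD : B.domain ≤ D.domain)
    (hDc : D.IsClosable)
    (hR : IsResolventAt B lam R) (hS : IsResolventAt B.adjoint (conj lam) S)
    (hsa : IsSelfAdjoint (blockOpL A B B.adjoint D)) :
    (B.adjoint - pcomp D ((R : H →ₗ[ℂ] H).compPMap A)).adjoint
      ≤ (B - pcomp A ((S : H →ₗ[ℂ] H).compPMap D)) := by
  have heq : (blockOpL A B B.adjoint D).adjoint = blockOpL A B B.adjoint D :=
    LinearPMap.isSelfAdjoint_def.mp hsa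
  apply le_of_forall_exists
  intro u hu
  set G := clmComp D hDc R (fun z => hBD (hR.mem z)) with hG
  set v := -(ContinuousLinearMap.adjoint G u) with hv
  set h := (B.adjoint - pcomp D ((R : H →ₗ[ℂ] H).compPMap A)).adjoint ⟨u, hu⟩ with hh
  have key : ∀ q : (blockOpL A B B.adjoint D).domain,
      ⟪(WithLp.equiv 2 (H × H)).symm (h, conj lam • v), (q : WithLp 2 (H × H))⟫
        = ⟪(WithLp.equiv 2 (H × H)).symm (v, u), blockOpL A B B.adjoint D q⟫ := by
    intro q
    rw [blockL_inner_right, withlp_fst, withlp_snd, inner_add_right, inner_add_right]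
    have hxpart : ⟪v, A ⟨(q : WithLp 2 (H × H)).fst, q.2.1.1⟩⟫
        + ⟪u, B.adjoint ⟨(q : WithLp 2 (H × H)).fst, q.2.1.2⟩⟫
        = ⟪h, (q : WithLp 2 (H × H)).fst⟫ := by
      have hqf : (q : WithLp 2 (H × H)).fst
          ∈ (B.adjoint - pcomp D ((R : H →ₗ[ℂ] H).compPMap A)).domain :=
        (mem_T2_iff hBA hBD hR).mpr q.2.1.2
      have hA : ⟪v, A ⟨(q : WithLp 2 (H × H)).fst, q.2.1.1⟩⟫
          = -⟪u, D ⟨R (A ⟨(q : WithLp 2 (H × H)).fst, hBA q.2.1.2⟩),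
              hBD (hR.mem _)⟩⟫ := by
        rw [hv, inner_neg_left, ContinuousLinearMap.adjoint_inner_left, clmComp_apply]
      have hfa := adjoint_isFormalAdjoint (T2_dense hBad hBA hBD hR) ⟨u, hu⟩
        ⟨(q : WithLp 2 (H × H)).fst, hqf⟩
      rw [T2_apply hBA hBD hR hqf, inner_sub_right] at hfa
      have hfa2 : ⟪h, (q : WithLp 2 (H × H)).fst⟫
          = ⟪u, B.adjoint ⟨(q : WithLp 2 (H × H)).fst, q.2.1.2⟩⟫
            - ⟪u, D ⟨R (A ⟨(q : WithLp 2 (H × H)).fst, hBA q.2.1.2⟩),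
                hBD (hR.mem _)⟩⟫ := hfa
      rw [hA, hfa2]
      ring
    have hypart : ⟪v, B ⟨(q : WithLp 2 (H × H)).snd, q.2.2.1⟩⟫
        + ⟪u, D ⟨(q : WithLp 2 (H × H)).snd, q.2.2.2⟩⟫
        = ⟪conj lam • v, (q : WithLp 2 (H × H)).snd⟫ := by
      have hRB : R (B ⟨(q : WithLp 2 (H × H)).snd, q.2.2.1⟩)
          = (q : WithLp 2 (H × H)).snd + lam • R ((q : WithLp 2 (H × H)).snd) := by
        have hli := hR.left_inv ⟨(q : WithLp 2 (H × H)).snd, q.2.2.1⟩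
        rw [_root_.map_sub, _root_.map_smul] at hli
        exact sub_eq_iff_eq_add.mp hli
      have hGB : G (B ⟨(q : WithLp 2 (H × H)).snd, q.2.2.1⟩)
          = D ⟨(q : WithLp 2 (H × H)).snd, q.2.2.2⟩ + lam • G ((q : WithLp 2 (H × H)).snd) := by
        rw [hG, clmComp_apply, clmComp_apply]
        rw [show (⟨R (B ⟨(q : WithLp 2 (H × H)).snd, q.2.2.1⟩),
            hBD (hR.mem _)⟩ : D.domain)
          = ⟨(q : WithLp 2 (H × H)).snd, q.2.2.2⟩
            + lam • ⟨R ((q : WithLp 2 (H × H)).snd), hBD (hR.mem _)⟩ from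
          Subtype.ext hRB]
        rw [LinearPMap.map_add, LinearPMap.map_smul]
      have hvB : ⟪v, B ⟨(q : WithLp 2 (H × H)).snd, q.2.2.1⟩⟫
          = -⟪u, D ⟨(q : WithLp 2 (H × H)).snd, q.2.2.2⟩⟫
            - lam * ⟪u, G ((q : WithLp 2 (H × H)).snd)⟫ := by
        rw [hv, inner_neg_left, ContinuousLinearMap.adjoint_inner_left, hGB,
          inner_add_right, inner_smul_right]
        ring
      rw [hvB, hv, inner_smul_left, inner_neg_left, Complex.conj_conj,
        ContinuousLinearMap.adjoint_inner_left]
      ring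
    rw [show ⟪(WithLp.equiv 2 (H × H)).symm (h, conj lam • v), (q : WithLp 2 (H × H))⟫
      = ⟪h, (q : WithLp 2 (H × H)).fst⟫ + ⟪conj lam • v, (q : WithLp 2 (H × H)).snd⟫ from rfl]
    rw [← hxpart, ← hypart]
    ring
  obtain ⟨hw, hval⟩ := mem_adjoint_of_forall hdense key
  have hdom : (WithLp.equiv 2 (H × H)).symm (v, u) ∈ (blockOpL A B B.adjoint D).domain := by
    rw [← congrArg LinearPMap.domain heq]
    exact hw
  have hu' : u ∈ B.domain := hdom.2.1
  have hu2 : u ∈ (B - pcomp A ((S : H →ₗ[ℂ] H).compPMap D)).domain :=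
    (mem_T1_iff hBA hBD hS).mpr hu'
  refine ⟨hu2, ?_⟩
  obtain ⟨hde, hfn⟩ := LinearPMap.ext_iff.mp heq
  have hvals : blockOpL A B B.adjoint D ⟨(WithLp.equiv 2 (H × H)).symm (v, u), hdom⟩
      = (WithLp.equiv 2 (H × H)).symm (h, conj lam • v) := by
    rw [← hfn (x := (WithLp.equiv 2 (H × H)).symm (v, u)) (hf := hw) (hg := hdom)]
    exact hval
  have hfst : A ⟨v, hdom.1.1⟩ + B ⟨u, hdom.2.1⟩ = h := by
    have := congrArg (fun t : WithLp 2 (H × H) => t.fst) hvals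
    exact this
  have hvA : (⟨v, hdom.1.1⟩ : A.domain)
      = -(⟨S (D ⟨u, hBD hu'⟩), hBA (hS.mem _)⟩ : A.domain) := by
    apply Subtype.ext
    show v = -(S (D ⟨u, hBD hu'⟩))
    rw [hv, Gadj_eq hBd hDd hDsym hBD hDc hR hS hu']
  rw [T1_apply hBA hBD hS hu2]
  rw [← hfst, hvA, LinearPMap.map_neg]
  have : B ⟨u, hu2.1⟩ = B ⟨u, hdom.2.1⟩ := rfl
  rw [this]
  abel
theorem inner_A_S (hAd : Dense (A.domain : Set H)) (hBd : Dense (B.domain : Set H))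
    (hAsym : A ≤ A.adjoint) (hBA : B.adjoint.domain ≤ A.domain)
    (hR : IsResolventAt B lam R) (hS : IsResolventAt B.adjoint (conj lam) S)
    {u : H} (hu : u ∈ B.adjoint.domain) (z : H) :
    ⟪u, A ⟨S z, hBA (hS.mem z)⟩⟫ = ⟪R (A ⟨u, hBA hu⟩), z⟫ := by
  have s1 : ⟪A ⟨S z, hBA (hS.mem z)⟩, u⟫ = ⟪z, R (A ⟨u, hBA hu⟩)⟫ := by
    rw [symm_inner hAd hAsym ⟨S z, hBA (hS.mem z)⟩ ⟨u, hBA hu⟩, inner_res_res' hBd hR hS]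
  have s2 := congrArg (starRingEnd ℂ) s1
  rw [inner_conj_symm, inner_conj_symm] at s2
  exact s2

theorem inner_D_R (hBd : Dense (B.domain : Set H)) (hDd : Dense (D.domain : Set H))
    (hDsym : D ≤ D.adjoint) (hBD : B.domain ≤ D.domain)
    (hR : IsResolventAt B lam R) (hS : IsResolventAt B.adjoint (conj lam) S)
    {v : H} (hv : v ∈ B.domain) (w' : H) :
    ⟪v, D ⟨R w', hBD (hR.mem w')⟩⟫ = ⟪S (D ⟨v, hBD hv⟩), w'⟫ := by
  have s1 : ⟪D ⟨R w', hBD (hR.mem w')⟩, v⟫ = ⟪w', S (D ⟨v, hBD hv⟩)⟫ := by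
    rw [symm_inner hDd hDsym ⟨R w', hBD (hR.mem w')⟩ ⟨v, hBD hv⟩, inner_res_res hBd hR hS]
  have s2 := congrArg (starRingEnd ℂ) s1
  rw [inner_conj_symm, inner_conj_symm] at s2
  exact s2

/-- Criterion (b) implies self-adjointness. -/
theorem sa_of_T1 (hAd : Dense (A.domain : Set H)) (hBd : Dense (B.domain : Set H))
    (hBad : Dense (B.adjoint.domain : Set H)) (hDd : Dense (D.domain : Set H))
    (hdense : Dense ((blockOpL A B B.adjoint D).domain : Set (WithLp 2 (H × H))))
    (hAsym : A ≤ A.adjoint) (hBsym : B ≤ B.adjoint.adjoint) (hDsym : D ≤ D.adjoint)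
    (hBA : B.adjoint.domain ≤ A.domain) (hBD : B.domain ≤ D.domain)
    (hR : IsResolventAt B lam R) (hS : IsResolventAt B.adjoint (conj lam) S)
    (hT : (B - pcomp A ((S : H →ₗ[ℂ] H).compPMap D)).adjoint
      = B.adjoint - pcomp D ((R : H →ₗ[ℂ] H).compPMap A)) :
    IsSelfAdjoint (blockOpL A B B.adjoint D) := by
  rw [LinearPMap.isSelfAdjoint_def]
  have hle : blockOpL A B B.adjoint D ≤ (blockOpL A B B.adjoint D).adjoint :=
    (blockSymm hAd hBd hBad hDd hAsym hBsym hDsym).le_adjoint hdense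
  have hge : (blockOpL A B B.adjoint D).adjoint ≤ blockOpL A B B.adjoint D := by
    refine ⟨?_, ?_⟩
    · intro p hp
      set w : ((blockOpL A B B.adjoint D).adjoint).domain := ⟨p, hp⟩ with hw
      set f := ((blockOpL A B B.adjoint D).adjoint w).fst with hf
      set g := ((blockOpL A B B.adjoint D).adjoint w).snd with hg
      have hq0 : R (f - lam • p.snd) ∈ B.domain := hR.mem _
      have key1 : ∀ y : (B - pcomp A ((S : H →ₗ[ℂ] H).compPMap D)).domain,
          ⟪g - D ⟨R (f - lam • p.snd), hBD hq0⟩, (y : H)⟫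
            = ⟪p.fst, (B - pcomp A ((S : H →ₗ[ℂ] H).compPMap D)) y⟫ := by
        intro y
        have hyd : (y : H) ∈ B.domain := y.2.1
        have e1 : ⟪p.fst, (B - pcomp A ((S : H →ₗ[ℂ] H).compPMap D)) y⟫
            = ⟪p.fst, B ⟨(y : H), hyd⟩⟫
              - ⟪p.fst, A ⟨S (D ⟨(y : H), hBD hyd⟩), hBA (hS.mem _)⟩⟫ := by
          rw [show (B - pcomp A ((S : H →ₗ[ℂ] H).compPMap D)) y
            = (B - pcomp A ((S : H →ₗ[ℂ] H).compPMap D)) ⟨(y : H), y.2⟩ from rfl,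
            T1_apply hBA hBD hS y.2, inner_sub_right]
        have e2 : ⟪p.fst, A ⟨S (D ⟨(y : H), hBD hyd⟩), hBA (hS.mem _)⟩⟫
            = ⟪R (f - lam • p.snd) - p.snd, D ⟨(y : H), hBD hyd⟩⟫ :=
          keyF hBd hBA hBD hdense hR hS w (D ⟨(y : H), hBD hyd⟩)
        have e3 : ⟪g, (y : H)⟫
            = ⟪p.fst, B ⟨(y : H), hyd⟩⟫ + ⟪p.snd, D ⟨(y : H), hBD hyd⟩⟫ :=
          adj_spec_snd hBA hBD hdense w hyd
        have e5 : ⟪R (f - lam • p.snd), D ⟨(y : H), hBD hyd⟩⟫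
            = ⟪D ⟨R (f - lam • p.snd), hBD hq0⟩, (y : H)⟫ :=
          (symm_inner hDd hDsym ⟨R (f - lam • p.snd), hBD hq0⟩ ⟨(y : H), hBD hyd⟩).symm
        calc ⟪g - D ⟨R (f - lam • p.snd), hBD hq0⟩, (y : H)⟫
            = ⟪g, (y : H)⟫ - ⟪D ⟨R (f - lam • p.snd), hBD hq0⟩, (y : H)⟫ :=
              inner_sub_left _ _ _
          _ = ⟪p.fst, B ⟨(y : H), hyd⟩⟫
              - (⟪R (f - lam • p.snd), D ⟨(y : H), hBD hyd⟩⟫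
                - ⟪p.snd, D ⟨(y : H), hBD hyd⟩⟫) := by rw [e3, ← e5]; ring
          _ = ⟪p.fst, B ⟨(y : H), hyd⟩⟫
              - ⟪R (f - lam • p.snd) - p.snd, D ⟨(y : H), hBD hyd⟩⟫ := by
                rw [inner_sub_left]
          _ = ⟪p.fst, (B - pcomp A ((S : H →ₗ[ℂ] H).compPMap D)) y⟫ := by
                rw [← e2, ← e1]
      obtain ⟨hmem1, _⟩ := mem_adjoint_of_forall (T1_dense hBd hBA hBD hS) key1
      rw [hT] at hmem1
      have huB : p.fst ∈ B.adjoint.domain := hmem1.1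
      have hvB : p.snd ∈ B.domain := by
        have hveq : R (f - lam • p.snd) - p.snd = R (A ⟨p.fst, hBA huB⟩) := by
          apply ext_inner_right ℂ
          intro z
          rw [← keyF hBd hBA hBD hdense hR hS w z,
            inner_A_S hAd hBd hAsym hBA hR hS huB z]
        have : p.snd = R (f - lam • p.snd) - R (A ⟨p.fst, hBA huB⟩) := by
          rw [← hveq]; abel
        rw [this]
        exact sub_mem (hR.mem _) (hR.mem _)
      exact ⟨⟨hBA huB, huB⟩, ⟨hvB, hBD hvB⟩⟩
    · intro x y hxy
      exact (hle.2 hxy.symm).symm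
  exact le_antisymm hge hle

/-- Criterion (c) implies self-adjointness. -/
theorem sa_of_T2 (hAd : Dense (A.domain : Set H)) (hBd : Dense (B.domain : Set H))
    (hBad : Dense (B.adjoint.domain : Set H)) (hDd : Dense (D.domain : Set H))
    (hdense : Dense ((blockOpL A B B.adjoint D).domain : Set (WithLp 2 (H × H))))
    (hAsym : A ≤ A.adjoint) (hBsym : B ≤ B.adjoint.adjoint) (hDsym : D ≤ D.adjoint)
    (hBA : B.adjoint.domain ≤ A.domain) (hBD : B.domain ≤ D.domain)
    (hR : IsResolventAt B lam R) (hS : IsResolventAt B.adjoint (conj lam) S)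
    (hT : (B.adjoint - pcomp D ((R : H →ₗ[ℂ] H).compPMap A)).adjoint
      = B - pcomp A ((S : H →ₗ[ℂ] H).compPMap D)) :
    IsSelfAdjoint (blockOpL A B B.adjoint D) := by
  rw [LinearPMap.isSelfAdjoint_def]
  have hle : blockOpL A B B.adjoint D ≤ (blockOpL A B B.adjoint D).adjoint :=
    (blockSymm hAd hBd hBad hDd hAsym hBsym hDsym).le_adjoint hdense
  have hge : (blockOpL A B B.adjoint D).adjoint ≤ blockOpL A B B.adjoint D := by
    refine ⟨?_, ?_⟩
    · intro p hp
      set w : ((blockOpL A B B.adjoint D).adjoint).domain := ⟨p, hp⟩ with hw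
      set f := ((blockOpL A B B.adjoint D).adjoint w).fst with hf
      set g := ((blockOpL A B B.adjoint D).adjoint w).snd with hg
      have hp0 : S (g - conj lam • p.fst) ∈ B.adjoint.domain := hS.mem _
      have key2 : ∀ x : (B.adjoint - pcomp D ((R : H →ₗ[ℂ] H).compPMap A)).domain,
          ⟪f - A ⟨S (g - conj lam • p.fst), hBA hp0⟩, (x : H)⟫
            = ⟪p.snd, (B.adjoint - pcomp D ((R : H →ₗ[ℂ] H).compPMap A)) x⟫ := by
        intro x
        have hxd : (x : H) ∈ B.adjoint.domain := x.2.1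
        have e1 : ⟪p.snd, (B.adjoint - pcomp D ((R : H →ₗ[ℂ] H).compPMap A)) x⟫
            = ⟪p.snd, B.adjoint ⟨(x : H), hxd⟩⟫
              - ⟪p.snd, D ⟨R (A ⟨(x : H), hBA hxd⟩), hBD (hR.mem _)⟩⟫ := by
          rw [show (B.adjoint - pcomp D ((R : H →ₗ[ℂ] H).compPMap A)) x
            = (B.adjoint - pcomp D ((R : H →ₗ[ℂ] H).compPMap A)) ⟨(x : H), x.2⟩ from rfl,
            T2_apply hBA hBD hR x.2, inner_sub_right]
        have e2 : ⟪p.snd, D ⟨R (A ⟨(x : H), hBA hxd⟩), hBD (hR.mem _)⟩⟫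
            = ⟪S (g - conj lam • p.fst) - p.fst, A ⟨(x : H), hBA hxd⟩⟫ :=
          keyG hBd hBA hBD hdense hR hS w (A ⟨(x : H), hBA hxd⟩)
        have e3 : ⟪f, (x : H)⟫
            = ⟪p.fst, A ⟨(x : H), hBA hxd⟩⟫ + ⟪p.snd, B.adjoint ⟨(x : H), hxd⟩⟫ :=
          adj_spec_fst hBA hBD hdense w hxd
        have e5 : ⟪S (g - conj lam • p.fst), A ⟨(x : H), hBA hxd⟩⟫
            = ⟪A ⟨S (g - conj lam • p.fst), hBA hp0⟩, (x : H)⟫ :=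
          (symm_inner hAd hAsym ⟨S (g - conj lam • p.fst), hBA hp0⟩ ⟨(x : H), hBA hxd⟩).symm
        calc ⟪f - A ⟨S (g - conj lam • p.fst), hBA hp0⟩, (x : H)⟫
            = ⟪f, (x : H)⟫ - ⟪A ⟨S (g - conj lam • p.fst), hBA hp0⟩, (x : H)⟫ :=
              inner_sub_left _ _ _
          _ = ⟪p.snd, B.adjoint ⟨(x : H), hxd⟩⟫
              - (⟪S (g - conj lam • p.fst), A ⟨(x : H), hBA hxd⟩⟫
                - ⟪p.fst, A ⟨(x : H), hBA hxd⟩⟫) := by rw [e3, ← e5]; ring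
          _ = ⟪p.snd, B.adjoint ⟨(x : H), hxd⟩⟫
              - ⟪S (g - conj lam • p.fst) - p.fst, A ⟨(x : H), hBA hxd⟩⟫ := by
                rw [inner_sub_left]
          _ = ⟪p.snd, (B.adjoint - pcomp D ((R : H →ₗ[ℂ] H).compPMap A)) x⟫ := by
                rw [← e2, ← e1]
      obtain ⟨hmem1, _⟩ := mem_adjoint_of_forall (T2_dense hBad hBA hBD hR) key2
      rw [hT] at hmem1
      have hvB : p.snd ∈ B.domain := hmem1.1
      have huB : p.fst ∈ B.adjoint.domain := by
        have hueq : S (g - conj lam • p.fst) - p.fst = S (D ⟨p.snd, hBD hvB⟩) := by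
          apply ext_inner_right ℂ
          intro z
          rw [← keyG hBd hBA hBD hdense hR hS w z,
            inner_D_R hBd hDd hDsym hBD hR hS hvB z]
        have : p.fst = S (g - conj lam • p.fst) - S (D ⟨p.snd, hBD hvB⟩) := by
          rw [← hueq]; abel
        rw [this]
        exact sub_mem (hS.mem _) (hS.mem _)
      exact ⟨⟨hBA huB, huB⟩, ⟨hvB, hBD hvB⟩⟩
    · intro x y hxy
      exact (hle.2 hxy.symm).symm
  exact le_antisymm hge hle

end Main
end Aux
end BlockOp
namespace BlockOp

theorem statement16 {H : Type*} [NormedAddCommGroup H] [InnerProductSpace ℂ H] [CompleteSpace H]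
    (A B D : H →ₗ.[ℂ] H)
    (hAd : Dense (A.domain : Set H)) (hBd : Dense (B.domain : Set H))
    (hBad : Dense (B.adjoint.domain : Set H)) (hDd : Dense (D.domain : Set H))
    (hAc : A.IsClosable) (hBc : B.IsClosable) (hBac : B.adjoint.IsClosable)
    (hDc : D.IsClosable)
    (hAsym : A ≤ A.adjoint) (hBsym : B ≤ B.adjoint.adjoint) (hDsym : D ≤ D.adjoint)
    (hdense : Dense ((blockOpL A B B.adjoint D).domain : Set (WithLp 2 (H × H))))
    (hBclosed : B.IsClosed) (hres : (resolventSet B).Nonempty)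
    (hBA : B.adjoint.domain ≤ A.domain) (hBD : B.domain ≤ D.domain) :
    (IsSelfAdjoint (blockOpL A B B.adjoint D) ↔
      ∃ (lam : ℂ) (R S : H →L[ℂ] H), IsResolventAt B lam R ∧
        IsResolventAt B.adjoint (starRingEnd ℂ lam) S ∧
        (B - pcomp A ((S : H →ₗ[ℂ] H).compPMap D)).adjoint =
          B.adjoint - pcomp D ((R : H →ₗ[ℂ] H).compPMap A)) ∧
    (IsSelfAdjoint (blockOpL A B B.adjoint D) ↔
      ∃ (lam : ℂ) (R S : H →L[ℂ] H), IsResolventAt B lam R ∧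
        IsResolventAt B.adjoint (starRingEnd ℂ lam) S ∧
        (B.adjoint - pcomp D ((R : H →ₗ[ℂ] H).compPMap A)).adjoint =
          B - pcomp A ((S : H →ₗ[ℂ] H).compPMap D)) ∧
    (IsSelfAdjoint (blockOpL A B B.adjoint D) →
      ∀ (lam : ℂ) (R S : H →L[ℂ] H), IsResolventAt B lam R →
        IsResolventAt B.adjoint (starRingEnd ℂ lam) S →
        ((B - pcomp A ((S : H →ₗ[ℂ] H).compPMap D)).adjoint =
            B.adjoint - pcomp D ((R : H →ₗ[ℂ] H).compPMap A) ∧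
          (B.adjoint - pcomp D ((R : H →ₗ[ℂ] H).compPMap A)).adjoint =
            B - pcomp A ((S : H →ₗ[ℂ] H).compPMap D))) := by
  constructor
  · constructor
    · intro hsa
      obtain ⟨lam, R, hR⟩ := hres
      have hS := hR.adjointRes hBd
      refine ⟨lam, R, ContinuousLinearMap.adjoint R, hR, hS, ?_⟩
      exact le_antisymm
        (adjT1_le_T2 hAd hBd hDd hdense hAsym hDsym hBA hBD hAc hR hS hsa)
        (T2_le_adjT1 hAd hBd hDd hAsym hDsym hBA hBD hR hS)
    · rintro ⟨lam, R, S, hR, hS, hT⟩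
      exact sa_of_T1 hAd hBd hBad hDd hdense hAsym hBsym hDsym hBA hBD hR hS hT
  constructor
  · constructor
    · intro hsa
      obtain ⟨lam, R, hR⟩ := hres
      have hS := hR.adjointRes hBd
      refine ⟨lam, R, ContinuousLinearMap.adjoint R, hR, hS, ?_⟩
      exact le_antisymm
        (adjT2_le_T1 hBd hBad hDd hdense hDsym hBA hBD hDc hR hS hsa)
        (T1_le_adjT2 hAd hBd hBad hDd hAsym hDsym hBA hBD hR hS)
    · rintro ⟨lam, R, S, hR, hS, hT⟩
      exact sa_of_T2 hAd hBd hBad hDd hdense hAsym hBsym hDsym hBA hBD hR hS hT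
  · intro hsa lam R S hR hS
    constructor
    · exact le_antisymm
        (adjT1_le_T2 hAd hBd hDd hdense hAsym hDsym hBA hBD hAc hR hS hsa)
        (T2_le_adjT1 hAd hBd hDd hAsym hDsym hBA hBD hR hS)
    · exact le_antisymm
        (adjT2_le_T1 hBd hBad hDd hdense hDsym hBA hBD hDc hR hS hsa)
        (T1_le_adjT2 hAd hBd hBad hDd hAsym hDsym hBA hBD hR hS)

end BlockOp
end
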